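/- Let U be a graph such that both U and its complement are claw-free, and let x be a vertex of U belonging to a 3-element independent set B. Then the degree of x in U is at most 4. Moreover, the subgraph W induced by U on the union of B and the neighborhood N_U(x) satisfies: if the degree of x in U equals 3, then W is isomorphic to the complement of A6 or to the complement of E6; if the degree of x in U equals 4, then W is isomorphic to the complement of P_{9−ε}. -/

import Mathlib

open SimpleGraph

/-- The claw `K_{1,3}`: vertex 0 joined to each of the pairwise
    nonadjacent vertices 1, 2, 3. -/
def claw : SimpleGraph (Fin 4) := SimpleGraph.fromRel (fun a _ => a = 0)

/-- A graph is claw-free if it has no induced subgraph isomorphic to `K_{1,3}`. -/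
def ClawFree {V : Type*} (G : SimpleGraph V) : Prop := IsEmpty (claw ↪g G)

/-- The graph `A6`: a triangle 0,1,2 (= a,b,c) together with pairwise nonadjacent
    vertices 3,4,5 (= a',b',c'), where 3 is adjacent exactly to 1,2; 4 exactly
    to 0,2; and 5 exactly to 0,1. -/
def A6 : SimpleGraph (Fin 6) := SimpleGraph.fromRel (fun a b =>
  (a = 0 ∧ b = 1) ∨ (a = 0 ∧ b = 2) ∨ (a = 1 ∧ b = 2) ∨
  (a = 3 ∧ b = 1) ∨ (a = 3 ∧ b = 2) ∨ (a = 4 ∧ b = 0) ∨ (a = 4 ∧ b = 2) ∨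
  (a = 5 ∧ b = 0) ∨ (a = 5 ∧ b = 1))

instance : Fact (Nat.Prime 3) := ⟨by norm_num⟩

/-- The Paley graph on the 9-element field `GF(9)`: two distinct vertices `x`, `y`
    are adjacent iff `x - y` is a (nonzero) square. -/
def P9 : SimpleGraph (GaloisField 3 2) :=
  SimpleGraph.fromRel (fun a b => IsSquare (a - b))

/-- The bull `B5`: a triangle 0,1,2 with pendant edges 3–1 and 4–2. -/
def B5 : SimpleGraph (Fin 5) := SimpleGraph.fromRel (fun a b =>
  (a = 0 ∧ b = 1) ∨ (a = 0 ∧ b = 2) ∨ (a = 1 ∧ b = 2) ∨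
  (a = 3 ∧ b = 1) ∨ (a = 4 ∧ b = 2))

/-- The graph `E6`: a 4-cycle 0,1,2,3 together with a vertex 4 adjacent exactly
    to 0 and 3 and a vertex 5 adjacent exactly to 2 and 3. -/
def E6 : SimpleGraph (Fin 6) := SimpleGraph.fromRel (fun a b =>
  (a = 0 ∧ b = 1) ∨ (a = 1 ∧ b = 2) ∨ (a = 2 ∧ b = 3) ∨ (a = 3 ∧ b = 0) ∨
  (a = 4 ∧ b = 0) ∨ (a = 4 ∧ b = 3) ∨ (a = 5 ∧ b = 2) ∨ (a = 5 ∧ b = 3))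

/-- `P_{9-v}`: the Paley graph `P9` with one vertex deleted (well defined up to
    isomorphism by vertex-transitivity). -/
def P9minusV : SimpleGraph {x : GaloisField 3 2 // x ≠ 0} :=
  P9.induce {x : GaloisField 3 2 | x ≠ 0}

/-- `P_{9-ε}`: the Paley graph `P9` with the two endpoints of an edge deleted
    (well defined up to isomorphism by edge-transitivity); here we delete the
    endpoints of the edge `{0, 1}`. -/
def P9minusEps : SimpleGraph {x : GaloisField 3 2 // x ≠ 0 ∧ x ≠ 1} :=
  P9.induce {x : GaloisField 3 2 | x ≠ 0 ∧ x ≠ 1}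

lemma noClaw {V : Type*} {G : SimpleGraph V} (h : ClawFree G)
    {a b c d : V} (hbc : b ≠ c) (hbd : b ≠ d) (hcd : c ≠ d)
    (hab : G.Adj a b) (hac : G.Adj a c) (had : G.Adj a d)
    (h1 : ¬G.Adj b c) (h2 : ¬G.Adj b d) (h3 : ¬G.Adj c d) : False := by
  apply h.elim'
  refine ⟨⟨![a,b,c,d], ?_⟩, ?_⟩
  · intro i j hij
    fin_cases i <;> fin_cases j <;>
      simp_all [Matrix.cons_val_zero, Matrix.cons_val_one, Matrix.head_cons]
  · intro i j
    fin_cases i <;> fin_cases j <;>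
      simp [claw, SimpleGraph.fromRel_adj, Matrix.cons_val_zero, Matrix.cons_val_one,
        Matrix.head_cons] <;>
      first
        | exact G.irrefl
        | assumption
        | exact hab.symm | exact hac.symm | exact had.symm
        | exact fun h' => h1 h'.symm | exact fun h' => h2 h'.symm | exact fun h' => h3 h'.symm

-- claw in complement, stated with U-adjacency
lemma noClawC {V : Type*} {U : SimpleGraph V} (h : ClawFree Uᶜ)
    {a b c d : V} (nab : a ≠ b) (nac : a ≠ c) (nad : a ≠ d)
    (hab : ¬U.Adj a b) (hac : ¬U.Adj a c) (had : ¬U.Adj a d)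
    (h1 : U.Adj b c) (h2 : U.Adj b d) (h3 : U.Adj c d) : False := by
  exact noClaw h h1.ne h2.ne h3.ne ((U.compl_adj a b).mpr ⟨nab, hab⟩)
    ((U.compl_adj a c).mpr ⟨nac, hac⟩) ((U.compl_adj a d).mpr ⟨nad, had⟩)
    (fun hx => ((U.compl_adj b c).mp hx).2 h1)
    (fun hx => ((U.compl_adj b d).mp hx).2 h2)
    (fun hx => ((U.compl_adj c d).mp hx).2 h3)

instance : DecidableRel A6.Adj := fun a b =>
  decidable_of_iff' _ (SimpleGraph.fromRel_adj _ a b)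

lemma patternA6 {V : Type*} (U : SimpleGraph V) (S : Set V)
    (x y z n1 n2 n3 : V)
    (hS : S = {x, y, z, n1, n2, n3})
    (dxy : x ≠ y) (dxz : x ≠ z) (dyz : y ≠ z)
    (dy1 : y ≠ n1) (dy2 : y ≠ n2) (dy3 : y ≠ n3)
    (dz1 : z ≠ n1) (dz2 : z ≠ n2) (dz3 : z ≠ n3)
    (d12 : n1 ≠ n2) (d13 : n1 ≠ n3) (d23 : n2 ≠ n3)
    (axy : ¬U.Adj x y) (axz : ¬U.Adj x z) (ayz : ¬U.Adj y z)
    (ax1 : U.Adj x n1) (ax2 : U.Adj x n2) (ax3 : U.Adj x n3)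
    (ay1 : U.Adj y n1) (ay2 : ¬U.Adj y n2) (ay3 : ¬U.Adj y n3)
    (az1 : ¬U.Adj z n1) (az2 : U.Adj z n2) (az3 : ¬U.Adj z n3)
    (a12 : U.Adj n1 n2) (a13 : ¬U.Adj n1 n3) (a23 : ¬U.Adj n2 n3) :
    Nonempty (U.induce S ≃g A6ᶜ) := by
  have dx1 : x ≠ n1 := ax1.ne
  have dx2 : x ≠ n2 := ax2.ne
  have dx3 : x ≠ n3 := ax3.ne
  have mx : x ∈ S := by rw [hS]; simp
  have my : y ∈ S := by rw [hS]; simp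
  have mz : z ∈ S := by rw [hS]; simp
  have m1 : n1 ∈ S := by rw [hS]; simp
  have m2 : n2 ∈ S := by rw [hS]; simp
  have m3 : n3 ∈ S := by rw [hS]; simp
  let g : Fin 6 → ↥S := ![⟨n3, m3⟩, ⟨y, my⟩, ⟨z, mz⟩, ⟨x, mx⟩, ⟨n1, m1⟩, ⟨n2, m2⟩]
  have hginj : Function.Injective g := by
    have h1 : Function.Injective (Subtype.val ∘ g) := by
      have hfg : Subtype.val ∘ g = ![n3, y, z, x, n1, n2] := by
        funext i; fin_cases i <;> rfl
      rw [hfg, ← List.nodup_ofFn]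
      have hl : List.ofFn ![n3, y, z, x, n1, n2] = [n3, y, z, x, n1, n2] := by
        simp [List.ofFn_succ]
      rw [hl]
      simp only [List.nodup_cons, List.mem_cons, List.mem_singleton, List.not_mem_nil,
        List.nodup_nil, and_true, not_or, or_false]
      exact ⟨⟨dy3.symm, dz3.symm, dx3.symm, d13.symm, d23.symm⟩,
        ⟨dyz, dxy.symm, dy1, dy2⟩, ⟨dxz.symm, dz1, dz2⟩, ⟨dx1, dx2⟩, d12, not_false⟩
    exact fun a b hab => h1 (congrArg Subtype.val hab)
  have hgsurj : Function.Surjective g := by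
    rintro ⟨v, hv⟩
    rw [hS] at hv
    simp only [Set.mem_insert_iff, Set.mem_singleton_iff] at hv
    rcases hv with rfl | rfl | rfl | rfl | rfl | rfl
    · exact ⟨3, rfl⟩
    · exact ⟨1, rfl⟩
    · exact ⟨2, rfl⟩
    · exact ⟨4, rfl⟩
    · exact ⟨5, rfl⟩
    · exact ⟨0, rfl⟩
  let e := Equiv.ofBijective g ⟨hginj, hgsurj⟩
  refine ⟨⟨e.symm, ?_⟩⟩
  intro a b
  obtain ⟨p, rfl⟩ := e.surjective a
  obtain ⟨q, rfl⟩ := e.surjective b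
  rw [e.symm_apply_apply, e.symm_apply_apply]
  show A6ᶜ.Adj p q ↔ (U.induce S).Adj (g p) (g q)
  have hyx : ¬U.Adj y x := fun h' => axy h'.symm
  have hzx : ¬U.Adj z x := fun h' => axz h'.symm
  have hzy : ¬U.Adj z y := fun h' => ayz h'.symm
  have h1x : U.Adj n1 x := ax1.symm
  have h2x : U.Adj n2 x := ax2.symm
  have h3x : U.Adj n3 x := ax3.symm
  have h1y : U.Adj n1 y := ay1.symm
  have h2y : ¬U.Adj n2 y := fun h' => ay2 h'.symm
  have h3y : ¬U.Adj n3 y := fun h' => ay3 h'.symm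
  have h1z : ¬U.Adj n1 z := fun h' => az1 h'.symm
  have h2z : U.Adj n2 z := az2.symm
  have h3z : ¬U.Adj n3 z := fun h' => az3 h'.symm
  have h21 : U.Adj n2 n1 := a12.symm
  have h31 : ¬U.Adj n3 n1 := fun h' => a13 h'.symm
  have h32 : ¬U.Adj n3 n2 := fun h' => a23 h'.symm
  fin_cases p <;> fin_cases q <;>
    first
      | exact iff_of_false (by decide) (U.induce S).irrefl
      | exact iff_of_true (by decide) (by assumption)
      | exact iff_of_false (by decide) (by assumption)

instance : DecidableRel E6.Adj := fun a b =>
  decidable_of_iff' _ (SimpleGraph.fromRel_adj _ a b)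

lemma patternE6 {V : Type*} (U : SimpleGraph V) (S : Set V)
    (x y z n1 n2 n3 : V)
    (hS : S = {x, y, z, n1, n2, n3})
    (dxy : x ≠ y) (dxz : x ≠ z) (dyz : y ≠ z)
    (dy1 : y ≠ n1) (dy2 : y ≠ n2) (dy3 : y ≠ n3)
    (dz1 : z ≠ n1) (dz2 : z ≠ n2) (dz3 : z ≠ n3)
    (d12 : n1 ≠ n2) (d13 : n1 ≠ n3) (d23 : n2 ≠ n3)
    (axy : ¬U.Adj x y) (axz : ¬U.Adj x z) (ayz : ¬U.Adj y z)
    (ax1 : U.Adj x n1) (ax2 : U.Adj x n2) (ax3 : U.Adj x n3)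
    (ay1 : U.Adj y n1) (ay2 : U.Adj y n2) (ay3 : ¬U.Adj y n3)
    (az1 : ¬U.Adj z n1) (az2 : ¬U.Adj z n2) (az3 : U.Adj z n3)
    (a12 : ¬U.Adj n1 n2) (a13 : U.Adj n1 n3) (a23 : ¬U.Adj n2 n3) :
    Nonempty (U.induce S ≃g E6ᶜ) := by
  have dx1 : x ≠ n1 := ax1.ne
  have dx2 : x ≠ n2 := ax2.ne
  have dx3 : x ≠ n3 := ax3.ne
  have mx : x ∈ S := by rw [hS]; simp
  have my : y ∈ S := by rw [hS]; simp
  have mz : z ∈ S := by rw [hS]; simp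
  have m1 : n1 ∈ S := by rw [hS]; simp
  have m2 : n2 ∈ S := by rw [hS]; simp
  have m3 : n3 ∈ S := by rw [hS]; simp
  let g : Fin 6 → ↥S := ![⟨y, my⟩, ⟨n3, m3⟩, ⟨n2, m2⟩, ⟨z, mz⟩, ⟨x, mx⟩, ⟨n1, m1⟩]
  have hginj : Function.Injective g := by
    have h1 : Function.Injective (Subtype.val ∘ g) := by
      have hfg : Subtype.val ∘ g = ![y, n3, n2, z, x, n1] := by
        funext i; fin_cases i <;> rfl
      rw [hfg, ← List.nodup_ofFn]
      have hl : List.ofFn ![y, n3, n2, z, x, n1] = [y, n3, n2, z, x, n1] := by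
        simp [List.ofFn_succ]
      rw [hl]
      simp only [List.nodup_cons, List.mem_cons, List.mem_singleton, List.not_mem_nil,
        List.nodup_nil, and_true, not_or, or_false]
      exact ⟨⟨dy3, dy2, dyz, dxy.symm, dy1⟩,
        ⟨d23.symm, dz3.symm, dx3.symm, d13.symm⟩,
        ⟨dz2.symm, dx2.symm, d12.symm⟩, ⟨dxz.symm, dz1⟩, dx1, not_false⟩
    exact fun a b hab => h1 (congrArg Subtype.val hab)
  have hgsurj : Function.Surjective g := by
    rintro ⟨v, hv⟩
    rw [hS] at hv
    simp only [Set.mem_insert_iff, Set.mem_singleton_iff] at hv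
    rcases hv with rfl | rfl | rfl | rfl | rfl | rfl
    · exact ⟨4, rfl⟩
    · exact ⟨0, rfl⟩
    · exact ⟨3, rfl⟩
    · exact ⟨5, rfl⟩
    · exact ⟨2, rfl⟩
    · exact ⟨1, rfl⟩
  let e := Equiv.ofBijective g ⟨hginj, hgsurj⟩
  refine ⟨⟨e.symm, ?_⟩⟩
  intro a b
  obtain ⟨p, rfl⟩ := e.surjective a
  obtain ⟨q, rfl⟩ := e.surjective b
  rw [e.symm_apply_apply, e.symm_apply_apply]
  show E6ᶜ.Adj p q ↔ (U.induce S).Adj (g p) (g q)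
  have hyx : ¬U.Adj y x := fun h' => axy h'.symm
  have hzx : ¬U.Adj z x := fun h' => axz h'.symm
  have hzy : ¬U.Adj z y := fun h' => ayz h'.symm
  have h1x : U.Adj n1 x := ax1.symm
  have h2x : U.Adj n2 x := ax2.symm
  have h3x : U.Adj n3 x := ax3.symm
  have h1y : U.Adj n1 y := ay1.symm
  have h2y : U.Adj n2 y := ay2.symm
  have h3y : ¬U.Adj n3 y := fun h' => ay3 h'.symm
  have h1z : ¬U.Adj n1 z := fun h' => az1 h'.symm
  have h2z : ¬U.Adj n2 z := fun h' => az2 h'.symm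
  have h3z : U.Adj n3 z := az3.symm
  have h21 : ¬U.Adj n2 n1 := fun h' => a12 h'.symm
  have h31 : U.Adj n3 n1 := a13.symm
  have h32 : ¬U.Adj n3 n2 := fun h' => a23 h'.symm
  fin_cases p <;> fin_cases q <;>
    first
      | exact iff_of_false (by decide) (U.induce S).irrefl
      | exact iff_of_true (by decide) (by assumption)
      | exact iff_of_false (by decide) (by assumption)

section Cases
variable {V : Type*} {U : SimpleGraph V}

lemma caseE6 (hCF : ClawFree U) (hCFc : ClawFree Uᶜ) (S : Set V)
    (x y z n1 n2 n3 : V) (hS : S = {x, y, z, n1, n2, n3})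
    (dxy : x ≠ y) (dxz : x ≠ z) (dyz : y ≠ z)
    (d12 : n1 ≠ n2) (d13 : n1 ≠ n3) (d23 : n2 ≠ n3)
    (hxy : ¬U.Adj x y) (hxz : ¬U.Adj x z) (hyz : ¬U.Adj y z)
    (hx1 : U.Adj x n1) (hx2 : U.Adj x n2) (hx3 : U.Adj x n3)
    (hy1 : U.Adj n1 y) (hy2 : U.Adj n2 y) (hz3 : U.Adj n3 z) :
    Nonempty (U.induce S ≃g E6ᶜ) := by
  have dy1 : y ≠ n1 := fun h => hxy (by rw [h]; exact hx1)
  have dy2 : y ≠ n2 := fun h => hxy (by rw [h]; exact hx2)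
  have dy3 : y ≠ n3 := fun h => hxy (by rw [h]; exact hx3)
  have dz1 : z ≠ n1 := fun h => hxz (by rw [h]; exact hx1)
  have dz2 : z ≠ n2 := fun h => hxz (by rw [h]; exact hx2)
  have dz3 : z ≠ n3 := fun h => hxz (by rw [h]; exact hx3)
  have hz1 : ¬U.Adj n1 z := fun hz => noClaw hCF dxy dxz dyz hx1.symm hy1 hz hxy hxz hyz
  have hz2 : ¬U.Adj n2 z := fun hz => noClaw hCF dxy dxz dyz hx2.symm hy2 hz hxy hxz hyz
  have hy3 : ¬U.Adj n3 y := fun hy => noClaw hCF dxy dxz dyz hx3.symm hy hz3 hxy hxz hyz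
  have a12 : ¬U.Adj n1 n2 := fun h12 => noClawC hCFc dxz.symm dz1 dz2
    (fun h => hxz h.symm) (fun h => hz1 h.symm) (fun h => hz2 h.symm) hx1 hx2 h12
  by_cases h13 : U.Adj n1 n3
  · have a23 : ¬U.Adj n2 n3 := fun h23 =>
      noClaw hCF dz1 dz2 d12 hz3 h13.symm h23.symm
        (fun h => hz1 h.symm) (fun h => hz2 h.symm) a12
    exact patternE6 U S x y z n1 n2 n3 hS dxy dxz dyz dy1 dy2 dy3 dz1 dz2 dz3 d12 d13 d23
      hxy hxz hyz hx1 hx2 hx3 hy1.symm hy2.symm (fun h => hy3 h.symm)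
      (fun h => hz1 h.symm) (fun h => hz2 h.symm) hz3.symm a12 h13 a23
  · have h23 : U.Adj n2 n3 := by
      by_contra hno
      exact noClaw hCF d12 d13 d23 hx1 hx2 hx3 a12 h13 hno
    have hS' : S = {x, y, z, n2, n1, n3} := by rw [hS]; ext v; simp; tauto
    exact patternE6 U S x y z n2 n1 n3 hS' dxy dxz dyz dy2 dy1 dy3 dz2 dz1 dz3 d12.symm d23 d13
      hxy hxz hyz hx2 hx1 hx3 hy2.symm hy1.symm (fun h => hy3 h.symm)
      (fun h => hz2 h.symm) (fun h => hz1 h.symm) hz3.symm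
      (fun h => a12 h.symm) h23 h13

lemma caseA6 (hCF : ClawFree U) (hCFc : ClawFree Uᶜ) (S : Set V)
    (x y z n1 n2 n3 : V) (hS : S = {x, y, z, n1, n2, n3})
    (dxy : x ≠ y) (dxz : x ≠ z) (dyz : y ≠ z)
    (d12 : n1 ≠ n2) (d13 : n1 ≠ n3) (d23 : n2 ≠ n3)
    (hxy : ¬U.Adj x y) (hxz : ¬U.Adj x z) (hyz : ¬U.Adj y z)
    (hx1 : U.Adj x n1) (hx2 : U.Adj x n2) (hx3 : U.Adj x n3)
    (hy1 : U.Adj n1 y) (hz2 : U.Adj n2 z) (hy3 : ¬U.Adj n3 y) (hz3 : ¬U.Adj n3 z) :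
    Nonempty (U.induce S ≃g A6ᶜ) := by
  have dy1 : y ≠ n1 := fun h => hxy (by rw [h]; exact hx1)
  have dy2 : y ≠ n2 := fun h => hxy (by rw [h]; exact hx2)
  have dy3 : y ≠ n3 := fun h => hxy (by rw [h]; exact hx3)
  have dz1 : z ≠ n1 := fun h => hxz (by rw [h]; exact hx1)
  have dz2 : z ≠ n2 := fun h => hxz (by rw [h]; exact hx2)
  have dz3 : z ≠ n3 := fun h => hxz (by rw [h]; exact hx3)
  have hz1 : ¬U.Adj n1 z := fun hz => noClaw hCF dxy dxz dyz hx1.symm hy1 hz hxy hxz hyz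
  have hy2 : ¬U.Adj n2 y := fun hy => noClaw hCF dxy dxz dyz hx2.symm hy hz2 hxy hxz hyz
  have a13 : ¬U.Adj n1 n3 := fun h13 => noClawC hCFc dxz.symm dz1 dz3
    (fun h => hxz h.symm) (fun h => hz1 h.symm) (fun h => hz3 h.symm) hx1 hx3 h13
  have a23 : ¬U.Adj n2 n3 := fun h23 => noClawC hCFc dxy.symm dy2 dy3
    (fun h => hxy h.symm) (fun h => hy2 h.symm) (fun h => hy3 h.symm) hx2 hx3 h23
  have a12 : U.Adj n1 n2 := by
    by_contra hno
    exact noClaw hCF d12 d13 d23 hx1 hx2 hx3 hno a13 a23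
  exact patternA6 U S x y z n1 n2 n3 hS dxy dxz dyz dy1 dy2 dy3 dz1 dz2 dz3 d12 d13 d23
    hxy hxz hyz hx1 hx2 hx3 hy1.symm (fun h => hy2 h.symm) (fun h => hy3 h.symm)
    (fun h => hz1 h.symm) hz2.symm (fun h => hz3 h.symm) a12 a13 a23

end Cases

set_option maxHeartbeats 3000000 in
lemma patternP9 {V : Type*} (U : SimpleGraph V) (S : Set V)
    (x y z n1 n2 n3 n4 : V)
    (hS : S = {x, y, z, n1, n2, n3, n4})
    (dxy : x ≠ y) (dxz : x ≠ z) (dx1 : x ≠ n1) (dx2 : x ≠ n2)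
    (dx3 : x ≠ n3) (dx4 : x ≠ n4) (dyz : y ≠ z) (dy1 : y ≠ n1)
    (dy2 : y ≠ n2) (dy3 : y ≠ n3) (dy4 : y ≠ n4) (dz1 : z ≠ n1)
    (dz2 : z ≠ n2) (dz3 : z ≠ n3) (dz4 : z ≠ n4) (d12 : n1 ≠ n2)
    (d13 : n1 ≠ n3) (d14 : n1 ≠ n4) (d23 : n2 ≠ n3) (d24 : n2 ≠ n4)
    (d34 : n3 ≠ n4)
    (axy : ¬U.Adj x y) (axz : ¬U.Adj x z) (ax1 : U.Adj x n1)
    (ax2 : U.Adj x n2) (ax3 : U.Adj x n3) (ax4 : U.Adj x n4)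
    (ayz : ¬U.Adj y z) (ay1 : U.Adj y n1) (ay2 : U.Adj y n2)
    (ay3 : ¬U.Adj y n3) (ay4 : ¬U.Adj y n4) (az1 : ¬U.Adj z n1)
    (az2 : ¬U.Adj z n2) (az3 : U.Adj z n3) (az4 : U.Adj z n4)
    (a12 : ¬U.Adj n1 n2) (a13 : U.Adj n1 n3) (a14 : ¬U.Adj n1 n4)
    (a23 : ¬U.Adj n2 n3) (a24 : U.Adj n2 n4) (a34 : ¬U.Adj n3 n4)
    : Nonempty (U.induce S ≃g P9minusEpsᶜ) := by
  classical
  set K := GaloisField 3 2 with hK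
  letI : Fintype K := Fintype.ofFinite K
  have hcard : Fintype.card K = 9 := by
    rw [← Nat.card_eq_fintype_card]
    rw [hK, GaloisField.card 3 2 (by norm_num)]
    norm_num
  have h3 : (3 : K) = 0 := by
    have := CharP.cast_eq_zero K 3
    exact_mod_cast this
  have hrc : ringChar K = 3 := (ringChar.eq K 3).symm ▸ rfl
  have hchar2 : ringChar K ≠ 2 := by rw [hrc]; norm_num
  obtain ⟨i, hi⟩ : ∃ j : K, -1 = j * j := by
    have h : IsSquare (-1 : K) := by
      rw [FiniteField.isSquare_neg_one_iff, hcard]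
      norm_num
    exact h
  have ftwo : (2 : K) ≠ 0 := fun h => one_ne_zero (show (1:K) = 0 by linear_combination h3 - h)
  have hnegsq : ∀ w : K, IsSquare w → IsSquare (-w) := by
    rintro w ⟨s, hs⟩
    exact ⟨s * i, by linear_combination s * s * hi - hs⟩
  have hns : ∀ w : K, w ≠ 0 → w ^ 4 = -1 → ¬IsSquare w := by
    intro w hw h4 hsq
    have h1 := (FiniteField.isSquare_iff hchar2 hw).mp hsq
    rw [hcard] at h1
    norm_num at h1
    rw [h4] at h1
    exact one_ne_zero (show (1:K) = 0 by linear_combination h3 + h1)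
  have sq1 : IsSquare ((1 : K)) := ⟨1, by ring⟩
  have sqm1 : IsSquare ((-1 : K)) := ⟨i, hi⟩
  have sqi : IsSquare (i) := ⟨1 - i, by linear_combination i * h3 + hi⟩
  have sqmi : IsSquare ((-i)) := ⟨1 + i, by linear_combination (-i) * h3 + hi⟩
  have fz1 : (1 : K) ≠ 0 := one_ne_zero
  have fzm1 : (-1 : K) ≠ 0 := neg_ne_zero.mpr one_ne_zero
  have fzi : i ≠ 0 := fun h => one_ne_zero (show (1:K) = 0 by linear_combination (-i) * h - hi)
  have fzmi : (-i) ≠ 0 := neg_ne_zero.mpr fzi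
  have fz11 : (1 : K) + i ≠ 0 := fun h => ftwo (show (2:K) = 0 by linear_combination (1 - i) * h - hi)
  have fz1m1 : (1 : K) + (-1)*i ≠ 0 := fun h => ftwo (show (2:K) = 0 by linear_combination (1 + i) * h - hi)
  have fzm11 : (-1 : K) + i ≠ 0 := fun h => fz1m1 (show (1:K) + (-1)*i = 0 by linear_combination -h)
  have fzm1m1 : (-1 : K) + (-1)*i ≠ 0 := fun h => fz11 (show (1:K) + i = 0 by linear_combination -h)
  have nsG : ¬IsSquare ((1 : K) + i) :=
    hns _ fz11 (by linear_combination (-(i^2 + 4*i + 5)) * hi - h3)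
  have nsD : ¬IsSquare ((1 : K) + (-1)*i) :=
    hns _ fz1m1 (by linear_combination (-(i^2 - 4*i + 5)) * hi - h3)
  have nsB : ¬IsSquare ((-1 : K) + i) := fun hs => nsD (by
    have h' := hnegsq _ hs
    rwa [show -((-1 : K) + i) = (1 : K) + (-1)*i from by ring] at h')
  have nsC : ¬IsSquare ((-1 : K) + (-1)*i) := fun hs => nsG (by
    have h' := hnegsq _ hs
    rwa [show -((-1 : K) + (-1)*i) = (1 : K) + i from by ring] at h')
  have ddZEROONE : ((0) : K) ≠ ((1) : K) := fun h => fzm1 (show ((-1) : K) = 0 by linear_combination h - ((0) : K) * h3)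
  have ddZEROA : ((0) : K) ≠ ((-1) : K) := fun h => fz1 (show ((1) : K) = 0 by linear_combination h - ((0) : K) * h3)
  have ddZEROB : ((0) : K) ≠ ((-1) + i) := fun h => fz1m1 (show ((1) + (-1)*i) = 0 by linear_combination h - ((0) : K) * h3)
  have ddZEROC : ((0) : K) ≠ ((-1) + (-1)*i) := fun h => fz11 (show ((1) + i) = 0 by linear_combination h - ((0) : K) * h3)
  have ddZEROD : ((0) : K) ≠ ((1) + (-1)*i) := fun h => fzm11 (show ((-1) + i) = 0 by linear_combination h - ((0) : K) * h3)
  have ddZEROE : ((0) : K) ≠ (-i) := fun h => fzi (show i = 0 by linear_combination h - ((0) : K) * h3)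
  have ddZEROF : ((0) : K) ≠ i := fun h => fzmi (show (-i) = 0 by linear_combination h - ((0) : K) * h3)
  have ddZEROG : ((0) : K) ≠ ((1) + i) := fun h => fzm1m1 (show ((-1) + (-1)*i) = 0 by linear_combination h - ((0) : K) * h3)
  have ddONEA : ((1) : K) ≠ ((-1) : K) := fun h => fzm1 (show ((-1) : K) = 0 by linear_combination h - ((1) : K) * h3)
  have ddONEB : ((1) : K) ≠ ((-1) + i) := fun h => fzm1m1 (show ((-1) + (-1)*i) = 0 by linear_combination h - ((1) : K) * h3)
  have ddONEC : ((1) : K) ≠ ((-1) + (-1)*i) := fun h => fzm11 (show ((-1) + i) = 0 by linear_combination h - ((1) : K) * h3)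
  have ddONED : ((1) : K) ≠ ((1) + (-1)*i) := fun h => fzi (show i = 0 by linear_combination h - ((0) : K) * h3)
  have ddONEE : ((1) : K) ≠ (-i) := fun h => fz11 (show ((1) + i) = 0 by linear_combination h - ((0) : K) * h3)
  have ddONEF : ((1) : K) ≠ i := fun h => fz1m1 (show ((1) + (-1)*i) = 0 by linear_combination h - ((0) : K) * h3)
  have ddONEG : ((1) : K) ≠ ((1) + i) := fun h => fzmi (show (-i) = 0 by linear_combination h - ((0) : K) * h3)
  have ddAB : ((-1) : K) ≠ ((-1) + i) := fun h => fzmi (show (-i) = 0 by linear_combination h - ((0) : K) * h3)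
  have ddAC : ((-1) : K) ≠ ((-1) + (-1)*i) := fun h => fzi (show i = 0 by linear_combination h - ((0) : K) * h3)
  have ddAD : ((-1) : K) ≠ ((1) + (-1)*i) := fun h => fz11 (show ((1) + i) = 0 by linear_combination h - ((-1) : K) * h3)
  have ddAE : ((-1) : K) ≠ (-i) := fun h => fzm11 (show ((-1) + i) = 0 by linear_combination h - ((0) : K) * h3)
  have ddAF : ((-1) : K) ≠ i := fun h => fzm1m1 (show ((-1) + (-1)*i) = 0 by linear_combination h - ((0) : K) * h3)
  have ddAG : ((-1) : K) ≠ ((1) + i) := fun h => fz1m1 (show ((1) + (-1)*i) = 0 by linear_combination h - ((-1) : K) * h3)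
  have ddBC : ((-1) + i) ≠ ((-1) + (-1)*i) := fun h => fzmi (show (-i) = 0 by linear_combination h - i * h3)
  have ddBD : ((-1) + i) ≠ ((1) + (-1)*i) := fun h => fz1m1 (show ((1) + (-1)*i) = 0 by linear_combination h - ((-1) + i) * h3)
  have ddBE : ((-1) + i) ≠ (-i) := fun h => fzm1m1 (show ((-1) + (-1)*i) = 0 by linear_combination h - i * h3)
  have ddBF : ((-1) + i) ≠ i := fun h => fzm1 (show ((-1) : K) = 0 by linear_combination h - ((0) : K) * h3)
  have ddBG : ((-1) + i) ≠ ((1) + i) := fun h => fz1 (show ((1) : K) = 0 by linear_combination h - ((-1) : K) * h3)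
  have ddCD : ((-1) + (-1)*i) ≠ ((1) + (-1)*i) := fun h => fz1 (show ((1) : K) = 0 by linear_combination h - ((-1) : K) * h3)
  have ddCE : ((-1) + (-1)*i) ≠ (-i) := fun h => fzm1 (show ((-1) : K) = 0 by linear_combination h - ((0) : K) * h3)
  have ddCF : ((-1) + (-1)*i) ≠ i := fun h => fzm11 (show ((-1) + i) = 0 by linear_combination h - (-i) * h3)
  have ddCG : ((-1) + (-1)*i) ≠ ((1) + i) := fun h => fz11 (show ((1) + i) = 0 by linear_combination h - ((-1) + (-1)*i) * h3)
  have ddDE : ((1) + (-1)*i) ≠ (-i) := fun h => fz1 (show ((1) : K) = 0 by linear_combination h - ((0) : K) * h3)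
  have ddDF : ((1) + (-1)*i) ≠ i := fun h => fz11 (show ((1) + i) = 0 by linear_combination h - (-i) * h3)
  have ddDG : ((1) + (-1)*i) ≠ ((1) + i) := fun h => fzi (show i = 0 by linear_combination h - (-i) * h3)
  have ddEF : (-i) ≠ i := fun h => fzi (show i = 0 by linear_combination h - (-i) * h3)
  have ddEG : (-i) ≠ ((1) + i) := fun h => fzm11 (show ((-1) + i) = 0 by linear_combination h - (-i) * h3)
  have ddFG : i ≠ ((1) + i) := fun h => fzm1 (show ((-1) : K) = 0 by linear_combination h - ((0) : K) * h3)
  have hL : ∀ v : K, v = ((0) : K) ∨ v = ((1) : K) ∨ v = ((-1) : K) ∨ v = ((-1) + i) ∨ v = ((-1) + (-1)*i) ∨ v = ((1) + (-1)*i) ∨ v = (-i) ∨ v = i ∨ v = ((1) + i) := by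
    intro v
    have h9 : ({((0) : K), ((1) : K), ((-1) : K), ((-1) + i), ((-1) + (-1)*i), ((1) + (-1)*i), (-i), i, ((1) + i)} : Finset K).card = 9 := by
      rw [Finset.card_insert_of_notMem (by simp only [Finset.mem_insert, Finset.mem_singleton]; push_neg; exact ⟨ddZEROONE, ddZEROA, ddZEROB, ddZEROC, ddZEROD, ddZEROE, ddZEROF, ddZEROG⟩)]
      rw [Finset.card_insert_of_notMem (by simp only [Finset.mem_insert, Finset.mem_singleton]; push_neg; exact ⟨ddONEA, ddONEB, ddONEC, ddONED, ddONEE, ddONEF, ddONEG⟩)]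
      rw [Finset.card_insert_of_notMem (by simp only [Finset.mem_insert, Finset.mem_singleton]; push_neg; exact ⟨ddAB, ddAC, ddAD, ddAE, ddAF, ddAG⟩)]
      rw [Finset.card_insert_of_notMem (by simp only [Finset.mem_insert, Finset.mem_singleton]; push_neg; exact ⟨ddBC, ddBD, ddBE, ddBF, ddBG⟩)]
      rw [Finset.card_insert_of_notMem (by simp only [Finset.mem_insert, Finset.mem_singleton]; push_neg; exact ⟨ddCD, ddCE, ddCF, ddCG⟩)]
      rw [Finset.card_insert_of_notMem (by simp only [Finset.mem_insert, Finset.mem_singleton]; push_neg; exact ⟨ddDE, ddDF, ddDG⟩)]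
      rw [Finset.card_insert_of_notMem (by simp only [Finset.mem_insert, Finset.mem_singleton]; push_neg; exact ⟨ddEF, ddEG⟩)]
      rw [Finset.card_insert_of_notMem (by simp only [Finset.mem_insert, Finset.mem_singleton]; push_neg; exact ddFG)]
      rfl
    have huniv : ({((0) : K), ((1) : K), ((-1) : K), ((-1) + i), ((-1) + (-1)*i), ((1) + (-1)*i), (-i), i, ((1) + i)} : Finset K) = Finset.univ := Finset.eq_univ_of_card _ (h9.trans hcard.symm)
    have hv : v ∈ ({((0) : K), ((1) : K), ((-1) : K), ((-1) + i), ((-1) + (-1)*i), ((1) + (-1)*i), (-i), i, ((1) + i)} : Finset K) := huniv ▸ Finset.mem_univ v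
    simpa only [Finset.mem_insert, Finset.mem_singleton] using hv
  have mA : ((-1) : K) ∈ {w : K | w ≠ 0 ∧ w ≠ 1} := ⟨fun h => fzm1 (show ((-1) : K) = 0 by linear_combination h - ((0) : K) * h3), fun h => fz1 (show ((1) : K) = 0 by linear_combination h - ((-1) : K) * h3)⟩
  have mB : ((-1) + i) ∈ {w : K | w ≠ 0 ∧ w ≠ 1} := ⟨fun h => fzm11 (show ((-1) + i) = 0 by linear_combination h - ((0) : K) * h3), fun h => fz11 (show ((1) + i) = 0 by linear_combination h - ((-1) : K) * h3)⟩
  have mC : ((-1) + (-1)*i) ∈ {w : K | w ≠ 0 ∧ w ≠ 1} := ⟨fun h => fzm1m1 (show ((-1) + (-1)*i) = 0 by linear_combination h - ((0) : K) * h3), fun h => fz1m1 (show ((1) + (-1)*i) = 0 by linear_combination h - ((-1) : K) * h3)⟩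
  have mD : ((1) + (-1)*i) ∈ {w : K | w ≠ 0 ∧ w ≠ 1} := ⟨fun h => fz1m1 (show ((1) + (-1)*i) = 0 by linear_combination h - ((0) : K) * h3), fun h => fzmi (show (-i) = 0 by linear_combination h - ((0) : K) * h3)⟩
  have mE : (-i) ∈ {w : K | w ≠ 0 ∧ w ≠ 1} := ⟨fun h => fzmi (show (-i) = 0 by linear_combination h - ((0) : K) * h3), fun h => fzm1m1 (show ((-1) + (-1)*i) = 0 by linear_combination h - ((0) : K) * h3)⟩
  have mF : i ∈ {w : K | w ≠ 0 ∧ w ≠ 1} := ⟨fun h => fzi (show i = 0 by linear_combination h - ((0) : K) * h3), fun h => fzm11 (show ((-1) + i) = 0 by linear_combination h - ((0) : K) * h3)⟩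
  have mG : ((1) + i) ∈ {w : K | w ≠ 0 ∧ w ≠ 1} := ⟨fun h => fz11 (show ((1) + i) = 0 by linear_combination h - ((0) : K) * h3), fun h => fzi (show i = 0 by linear_combination h - ((0) : K) * h3)⟩
  have mSx : x ∈ S := by rw [hS]; simp
  have mSy : y ∈ S := by rw [hS]; simp
  have mSz : z ∈ S := by rw [hS]; simp
  have mSn1 : n1 ∈ S := by rw [hS]; simp
  have mSn2 : n2 ∈ S := by rw [hS]; simp
  have mSn3 : n3 ∈ S := by rw [hS]; simp
  have mSn4 : n4 ∈ S := by rw [hS]; simp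
  have cAB : ¬P9minusEpsᶜ.Adj ⟨((-1) : K), mA⟩ ⟨((-1) + i), mB⟩ := by
    rw [SimpleGraph.compl_adj]
    rintro ⟨-, hna⟩
    exact hna ((SimpleGraph.fromRel_adj (fun a b : K => IsSquare (a - b)) _ _).mpr
      ⟨ddAB, Or.inl (show IsSquare (((-1) : K) - ((-1) + i)) by rw [show ((-1) : K) - ((-1) + i) = (-i) from by linear_combination ((0) : K) * h3]; exact sqmi)⟩)
  have cAC : ¬P9minusEpsᶜ.Adj ⟨((-1) : K), mA⟩ ⟨((-1) + (-1)*i), mC⟩ := by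
    rw [SimpleGraph.compl_adj]
    rintro ⟨-, hna⟩
    exact hna ((SimpleGraph.fromRel_adj (fun a b : K => IsSquare (a - b)) _ _).mpr
      ⟨ddAC, Or.inl (show IsSquare (((-1) : K) - ((-1) + (-1)*i)) by rw [show ((-1) : K) - ((-1) + (-1)*i) = i from by linear_combination ((0) : K) * h3]; exact sqi)⟩)
  have cAD : P9minusEpsᶜ.Adj ⟨((-1) : K), mA⟩ ⟨((1) + (-1)*i), mD⟩ := by
    rw [SimpleGraph.compl_adj]
    refine ⟨fun hh => ddAD (congrArg Subtype.val hh), fun hadj => ?_⟩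
    have hadj' := (SimpleGraph.fromRel_adj (fun a b : K => IsSquare (a - b)) _ _).mp hadj
    rcases hadj'.2 with hs | hs
    · have hs' : IsSquare (((-1) : K) - ((1) + (-1)*i)) := hs
      exact nsG (by rwa [show ((-1) : K) - ((1) + (-1)*i) = ((1) + i) from by linear_combination ((-1) : K) * h3] at hs')
    · have hs' : IsSquare (((1) + (-1)*i) - ((-1) : K)) := hs
      exact nsC (by rwa [show ((1) + (-1)*i) - ((-1) : K) = ((-1) + (-1)*i) from by linear_combination ((1) : K) * h3] at hs')
  have cAE : P9minusEpsᶜ.Adj ⟨((-1) : K), mA⟩ ⟨(-i), mE⟩ := by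
    rw [SimpleGraph.compl_adj]
    refine ⟨fun hh => ddAE (congrArg Subtype.val hh), fun hadj => ?_⟩
    have hadj' := (SimpleGraph.fromRel_adj (fun a b : K => IsSquare (a - b)) _ _).mp hadj
    rcases hadj'.2 with hs | hs
    · have hs' : IsSquare (((-1) : K) - (-i)) := hs
      exact nsB (by rwa [show ((-1) : K) - (-i) = ((-1) + i) from by linear_combination ((0) : K) * h3] at hs')
    · have hs' : IsSquare ((-i) - ((-1) : K)) := hs
      exact nsD (by rwa [show (-i) - ((-1) : K) = ((1) + (-1)*i) from by linear_combination ((0) : K) * h3] at hs')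
  have cAF : P9minusEpsᶜ.Adj ⟨((-1) : K), mA⟩ ⟨i, mF⟩ := by
    rw [SimpleGraph.compl_adj]
    refine ⟨fun hh => ddAF (congrArg Subtype.val hh), fun hadj => ?_⟩
    have hadj' := (SimpleGraph.fromRel_adj (fun a b : K => IsSquare (a - b)) _ _).mp hadj
    rcases hadj'.2 with hs | hs
    · have hs' : IsSquare (((-1) : K) - i) := hs
      exact nsC (by rwa [show ((-1) : K) - i = ((-1) + (-1)*i) from by linear_combination ((0) : K) * h3] at hs')
    · have hs' : IsSquare (i - ((-1) : K)) := hs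
      exact nsG (by rwa [show i - ((-1) : K) = ((1) + i) from by linear_combination ((0) : K) * h3] at hs')
  have cAG : P9minusEpsᶜ.Adj ⟨((-1) : K), mA⟩ ⟨((1) + i), mG⟩ := by
    rw [SimpleGraph.compl_adj]
    refine ⟨fun hh => ddAG (congrArg Subtype.val hh), fun hadj => ?_⟩
    have hadj' := (SimpleGraph.fromRel_adj (fun a b : K => IsSquare (a - b)) _ _).mp hadj
    rcases hadj'.2 with hs | hs
    · have hs' : IsSquare (((-1) : K) - ((1) + i)) := hs
      exact nsD (by rwa [show ((-1) : K) - ((1) + i) = ((1) + (-1)*i) from by linear_combination ((-1) : K) * h3] at hs')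
    · have hs' : IsSquare (((1) + i) - ((-1) : K)) := hs
      exact nsB (by rwa [show ((1) + i) - ((-1) : K) = ((-1) + i) from by linear_combination ((1) : K) * h3] at hs')
  have cBA : ¬P9minusEpsᶜ.Adj ⟨((-1) + i), mB⟩ ⟨((-1) : K), mA⟩ := by
    rw [SimpleGraph.compl_adj]
    rintro ⟨-, hna⟩
    exact hna ((SimpleGraph.fromRel_adj (fun a b : K => IsSquare (a - b)) _ _).mpr
      ⟨(Ne.symm ddAB), Or.inl (show IsSquare (((-1) + i) - ((-1) : K)) by rw [show ((-1) + i) - ((-1) : K) = i from by linear_combination ((0) : K) * h3]; exact sqi)⟩)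
  have cBC : ¬P9minusEpsᶜ.Adj ⟨((-1) + i), mB⟩ ⟨((-1) + (-1)*i), mC⟩ := by
    rw [SimpleGraph.compl_adj]
    rintro ⟨-, hna⟩
    exact hna ((SimpleGraph.fromRel_adj (fun a b : K => IsSquare (a - b)) _ _).mpr
      ⟨ddBC, Or.inl (show IsSquare (((-1) + i) - ((-1) + (-1)*i)) by rw [show ((-1) + i) - ((-1) + (-1)*i) = (-i) from by linear_combination i * h3]; exact sqmi)⟩)
  have cBD : P9minusEpsᶜ.Adj ⟨((-1) + i), mB⟩ ⟨((1) + (-1)*i), mD⟩ := by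
    rw [SimpleGraph.compl_adj]
    refine ⟨fun hh => ddBD (congrArg Subtype.val hh), fun hadj => ?_⟩
    have hadj' := (SimpleGraph.fromRel_adj (fun a b : K => IsSquare (a - b)) _ _).mp hadj
    rcases hadj'.2 with hs | hs
    · have hs' : IsSquare (((-1) + i) - ((1) + (-1)*i)) := hs
      exact nsD (by rwa [show ((-1) + i) - ((1) + (-1)*i) = ((1) + (-1)*i) from by linear_combination ((-1) + i) * h3] at hs')
    · have hs' : IsSquare (((1) + (-1)*i) - ((-1) + i)) := hs
      exact nsB (by rwa [show ((1) + (-1)*i) - ((-1) + i) = ((-1) + i) from by linear_combination ((1) + (-1)*i) * h3] at hs')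
  have cBE : P9minusEpsᶜ.Adj ⟨((-1) + i), mB⟩ ⟨(-i), mE⟩ := by
    rw [SimpleGraph.compl_adj]
    refine ⟨fun hh => ddBE (congrArg Subtype.val hh), fun hadj => ?_⟩
    have hadj' := (SimpleGraph.fromRel_adj (fun a b : K => IsSquare (a - b)) _ _).mp hadj
    rcases hadj'.2 with hs | hs
    · have hs' : IsSquare (((-1) + i) - (-i)) := hs
      exact nsC (by rwa [show ((-1) + i) - (-i) = ((-1) + (-1)*i) from by linear_combination i * h3] at hs')
    · have hs' : IsSquare ((-i) - ((-1) + i)) := hs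
      exact nsG (by rwa [show (-i) - ((-1) + i) = ((1) + i) from by linear_combination (-i) * h3] at hs')
  have cBF : ¬P9minusEpsᶜ.Adj ⟨((-1) + i), mB⟩ ⟨i, mF⟩ := by
    rw [SimpleGraph.compl_adj]
    rintro ⟨-, hna⟩
    exact hna ((SimpleGraph.fromRel_adj (fun a b : K => IsSquare (a - b)) _ _).mpr
      ⟨ddBF, Or.inl (show IsSquare (((-1) + i) - i) by rw [show ((-1) + i) - i = ((-1) : K) from by linear_combination ((0) : K) * h3]; exact sqm1)⟩)
  have cBG : ¬P9minusEpsᶜ.Adj ⟨((-1) + i), mB⟩ ⟨((1) + i), mG⟩ := by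
    rw [SimpleGraph.compl_adj]
    rintro ⟨-, hna⟩
    exact hna ((SimpleGraph.fromRel_adj (fun a b : K => IsSquare (a - b)) _ _).mpr
      ⟨ddBG, Or.inl (show IsSquare (((-1) + i) - ((1) + i)) by rw [show ((-1) + i) - ((1) + i) = ((1) : K) from by linear_combination ((-1) : K) * h3]; exact sq1)⟩)
  have cCA : ¬P9minusEpsᶜ.Adj ⟨((-1) + (-1)*i), mC⟩ ⟨((-1) : K), mA⟩ := by
    rw [SimpleGraph.compl_adj]
    rintro ⟨-, hna⟩
    exact hna ((SimpleGraph.fromRel_adj (fun a b : K => IsSquare (a - b)) _ _).mpr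
      ⟨(Ne.symm ddAC), Or.inl (show IsSquare (((-1) + (-1)*i) - ((-1) : K)) by rw [show ((-1) + (-1)*i) - ((-1) : K) = (-i) from by linear_combination ((0) : K) * h3]; exact sqmi)⟩)
  have cCB : ¬P9minusEpsᶜ.Adj ⟨((-1) + (-1)*i), mC⟩ ⟨((-1) + i), mB⟩ := by
    rw [SimpleGraph.compl_adj]
    rintro ⟨-, hna⟩
    exact hna ((SimpleGraph.fromRel_adj (fun a b : K => IsSquare (a - b)) _ _).mpr
      ⟨(Ne.symm ddBC), Or.inl (show IsSquare (((-1) + (-1)*i) - ((-1) + i)) by rw [show ((-1) + (-1)*i) - ((-1) + i) = i from by linear_combination (-i) * h3]; exact sqi)⟩)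
  have cCD : ¬P9minusEpsᶜ.Adj ⟨((-1) + (-1)*i), mC⟩ ⟨((1) + (-1)*i), mD⟩ := by
    rw [SimpleGraph.compl_adj]
    rintro ⟨-, hna⟩
    exact hna ((SimpleGraph.fromRel_adj (fun a b : K => IsSquare (a - b)) _ _).mpr
      ⟨ddCD, Or.inl (show IsSquare (((-1) + (-1)*i) - ((1) + (-1)*i)) by rw [show ((-1) + (-1)*i) - ((1) + (-1)*i) = ((1) : K) from by linear_combination ((-1) : K) * h3]; exact sq1)⟩)
  have cCE : ¬P9minusEpsᶜ.Adj ⟨((-1) + (-1)*i), mC⟩ ⟨(-i), mE⟩ := by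
    rw [SimpleGraph.compl_adj]
    rintro ⟨-, hna⟩
    exact hna ((SimpleGraph.fromRel_adj (fun a b : K => IsSquare (a - b)) _ _).mpr
      ⟨ddCE, Or.inl (show IsSquare (((-1) + (-1)*i) - (-i)) by rw [show ((-1) + (-1)*i) - (-i) = ((-1) : K) from by linear_combination ((0) : K) * h3]; exact sqm1)⟩)
  have cCF : P9minusEpsᶜ.Adj ⟨((-1) + (-1)*i), mC⟩ ⟨i, mF⟩ := by
    rw [SimpleGraph.compl_adj]
    refine ⟨fun hh => ddCF (congrArg Subtype.val hh), fun hadj => ?_⟩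
    have hadj' := (SimpleGraph.fromRel_adj (fun a b : K => IsSquare (a - b)) _ _).mp hadj
    rcases hadj'.2 with hs | hs
    · have hs' : IsSquare (((-1) + (-1)*i) - i) := hs
      exact nsB (by rwa [show ((-1) + (-1)*i) - i = ((-1) + i) from by linear_combination (-i) * h3] at hs')
    · have hs' : IsSquare (i - ((-1) + (-1)*i)) := hs
      exact nsD (by rwa [show i - ((-1) + (-1)*i) = ((1) + (-1)*i) from by linear_combination i * h3] at hs')
  have cCG : P9minusEpsᶜ.Adj ⟨((-1) + (-1)*i), mC⟩ ⟨((1) + i), mG⟩ := by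
    rw [SimpleGraph.compl_adj]
    refine ⟨fun hh => ddCG (congrArg Subtype.val hh), fun hadj => ?_⟩
    have hadj' := (SimpleGraph.fromRel_adj (fun a b : K => IsSquare (a - b)) _ _).mp hadj
    rcases hadj'.2 with hs | hs
    · have hs' : IsSquare (((-1) + (-1)*i) - ((1) + i)) := hs
      exact nsG (by rwa [show ((-1) + (-1)*i) - ((1) + i) = ((1) + i) from by linear_combination ((-1) + (-1)*i) * h3] at hs')
    · have hs' : IsSquare (((1) + i) - ((-1) + (-1)*i)) := hs
      exact nsC (by rwa [show ((1) + i) - ((-1) + (-1)*i) = ((-1) + (-1)*i) from by linear_combination ((1) + i) * h3] at hs')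
  have cDA : P9minusEpsᶜ.Adj ⟨((1) + (-1)*i), mD⟩ ⟨((-1) : K), mA⟩ := by
    rw [SimpleGraph.compl_adj]
    refine ⟨fun hh => (Ne.symm ddAD) (congrArg Subtype.val hh), fun hadj => ?_⟩
    have hadj' := (SimpleGraph.fromRel_adj (fun a b : K => IsSquare (a - b)) _ _).mp hadj
    rcases hadj'.2 with hs | hs
    · have hs' : IsSquare (((1) + (-1)*i) - ((-1) : K)) := hs
      exact nsC (by rwa [show ((1) + (-1)*i) - ((-1) : K) = ((-1) + (-1)*i) from by linear_combination ((1) : K) * h3] at hs')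
    · have hs' : IsSquare (((-1) : K) - ((1) + (-1)*i)) := hs
      exact nsG (by rwa [show ((-1) : K) - ((1) + (-1)*i) = ((1) + i) from by linear_combination ((-1) : K) * h3] at hs')
  have cDB : P9minusEpsᶜ.Adj ⟨((1) + (-1)*i), mD⟩ ⟨((-1) + i), mB⟩ := by
    rw [SimpleGraph.compl_adj]
    refine ⟨fun hh => (Ne.symm ddBD) (congrArg Subtype.val hh), fun hadj => ?_⟩
    have hadj' := (SimpleGraph.fromRel_adj (fun a b : K => IsSquare (a - b)) _ _).mp hadj
    rcases hadj'.2 with hs | hs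
    · have hs' : IsSquare (((1) + (-1)*i) - ((-1) + i)) := hs
      exact nsB (by rwa [show ((1) + (-1)*i) - ((-1) + i) = ((-1) + i) from by linear_combination ((1) + (-1)*i) * h3] at hs')
    · have hs' : IsSquare (((-1) + i) - ((1) + (-1)*i)) := hs
      exact nsD (by rwa [show ((-1) + i) - ((1) + (-1)*i) = ((1) + (-1)*i) from by linear_combination ((-1) + i) * h3] at hs')
  have cDC : ¬P9minusEpsᶜ.Adj ⟨((1) + (-1)*i), mD⟩ ⟨((-1) + (-1)*i), mC⟩ := by
    rw [SimpleGraph.compl_adj]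
    rintro ⟨-, hna⟩
    exact hna ((SimpleGraph.fromRel_adj (fun a b : K => IsSquare (a - b)) _ _).mpr
      ⟨(Ne.symm ddCD), Or.inl (show IsSquare (((1) + (-1)*i) - ((-1) + (-1)*i)) by rw [show ((1) + (-1)*i) - ((-1) + (-1)*i) = ((-1) : K) from by linear_combination ((1) : K) * h3]; exact sqm1)⟩)
  have cDE : ¬P9minusEpsᶜ.Adj ⟨((1) + (-1)*i), mD⟩ ⟨(-i), mE⟩ := by
    rw [SimpleGraph.compl_adj]
    rintro ⟨-, hna⟩
    exact hna ((SimpleGraph.fromRel_adj (fun a b : K => IsSquare (a - b)) _ _).mpr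
      ⟨ddDE, Or.inl (show IsSquare (((1) + (-1)*i) - (-i)) by rw [show ((1) + (-1)*i) - (-i) = ((1) : K) from by linear_combination ((0) : K) * h3]; exact sq1)⟩)
  have cDF : P9minusEpsᶜ.Adj ⟨((1) + (-1)*i), mD⟩ ⟨i, mF⟩ := by
    rw [SimpleGraph.compl_adj]
    refine ⟨fun hh => ddDF (congrArg Subtype.val hh), fun hadj => ?_⟩
    have hadj' := (SimpleGraph.fromRel_adj (fun a b : K => IsSquare (a - b)) _ _).mp hadj
    rcases hadj'.2 with hs | hs
    · have hs' : IsSquare (((1) + (-1)*i) - i) := hs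
      exact nsG (by rwa [show ((1) + (-1)*i) - i = ((1) + i) from by linear_combination (-i) * h3] at hs')
    · have hs' : IsSquare (i - ((1) + (-1)*i)) := hs
      exact nsC (by rwa [show i - ((1) + (-1)*i) = ((-1) + (-1)*i) from by linear_combination i * h3] at hs')
  have cDG : ¬P9minusEpsᶜ.Adj ⟨((1) + (-1)*i), mD⟩ ⟨((1) + i), mG⟩ := by
    rw [SimpleGraph.compl_adj]
    rintro ⟨-, hna⟩
    exact hna ((SimpleGraph.fromRel_adj (fun a b : K => IsSquare (a - b)) _ _).mpr
      ⟨ddDG, Or.inl (show IsSquare (((1) + (-1)*i) - ((1) + i)) by rw [show ((1) + (-1)*i) - ((1) + i) = i from by linear_combination (-i) * h3]; exact sqi)⟩)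
  have cEA : P9minusEpsᶜ.Adj ⟨(-i), mE⟩ ⟨((-1) : K), mA⟩ := by
    rw [SimpleGraph.compl_adj]
    refine ⟨fun hh => (Ne.symm ddAE) (congrArg Subtype.val hh), fun hadj => ?_⟩
    have hadj' := (SimpleGraph.fromRel_adj (fun a b : K => IsSquare (a - b)) _ _).mp hadj
    rcases hadj'.2 with hs | hs
    · have hs' : IsSquare ((-i) - ((-1) : K)) := hs
      exact nsD (by rwa [show (-i) - ((-1) : K) = ((1) + (-1)*i) from by linear_combination ((0) : K) * h3] at hs')
    · have hs' : IsSquare (((-1) : K) - (-i)) := hs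
      exact nsB (by rwa [show ((-1) : K) - (-i) = ((-1) + i) from by linear_combination ((0) : K) * h3] at hs')
  have cEB : P9minusEpsᶜ.Adj ⟨(-i), mE⟩ ⟨((-1) + i), mB⟩ := by
    rw [SimpleGraph.compl_adj]
    refine ⟨fun hh => (Ne.symm ddBE) (congrArg Subtype.val hh), fun hadj => ?_⟩
    have hadj' := (SimpleGraph.fromRel_adj (fun a b : K => IsSquare (a - b)) _ _).mp hadj
    rcases hadj'.2 with hs | hs
    · have hs' : IsSquare ((-i) - ((-1) + i)) := hs
      exact nsG (by rwa [show (-i) - ((-1) + i) = ((1) + i) from by linear_combination (-i) * h3] at hs')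
    · have hs' : IsSquare (((-1) + i) - (-i)) := hs
      exact nsC (by rwa [show ((-1) + i) - (-i) = ((-1) + (-1)*i) from by linear_combination i * h3] at hs')
  have cEC : ¬P9minusEpsᶜ.Adj ⟨(-i), mE⟩ ⟨((-1) + (-1)*i), mC⟩ := by
    rw [SimpleGraph.compl_adj]
    rintro ⟨-, hna⟩
    exact hna ((SimpleGraph.fromRel_adj (fun a b : K => IsSquare (a - b)) _ _).mpr
      ⟨(Ne.symm ddCE), Or.inl (show IsSquare ((-i) - ((-1) + (-1)*i)) by rw [show (-i) - ((-1) + (-1)*i) = ((1) : K) from by linear_combination ((0) : K) * h3]; exact sq1)⟩)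
  have cED : ¬P9minusEpsᶜ.Adj ⟨(-i), mE⟩ ⟨((1) + (-1)*i), mD⟩ := by
    rw [SimpleGraph.compl_adj]
    rintro ⟨-, hna⟩
    exact hna ((SimpleGraph.fromRel_adj (fun a b : K => IsSquare (a - b)) _ _).mpr
      ⟨(Ne.symm ddDE), Or.inl (show IsSquare ((-i) - ((1) + (-1)*i)) by rw [show (-i) - ((1) + (-1)*i) = ((-1) : K) from by linear_combination ((0) : K) * h3]; exact sqm1)⟩)
  have cEF : ¬P9minusEpsᶜ.Adj ⟨(-i), mE⟩ ⟨i, mF⟩ := by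
    rw [SimpleGraph.compl_adj]
    rintro ⟨-, hna⟩
    exact hna ((SimpleGraph.fromRel_adj (fun a b : K => IsSquare (a - b)) _ _).mpr
      ⟨ddEF, Or.inl (show IsSquare ((-i) - i) by rw [show (-i) - i = i from by linear_combination (-i) * h3]; exact sqi)⟩)
  have cEG : P9minusEpsᶜ.Adj ⟨(-i), mE⟩ ⟨((1) + i), mG⟩ := by
    rw [SimpleGraph.compl_adj]
    refine ⟨fun hh => ddEG (congrArg Subtype.val hh), fun hadj => ?_⟩
    have hadj' := (SimpleGraph.fromRel_adj (fun a b : K => IsSquare (a - b)) _ _).mp hadj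
    rcases hadj'.2 with hs | hs
    · have hs' : IsSquare ((-i) - ((1) + i)) := hs
      exact nsB (by rwa [show (-i) - ((1) + i) = ((-1) + i) from by linear_combination (-i) * h3] at hs')
    · have hs' : IsSquare (((1) + i) - (-i)) := hs
      exact nsD (by rwa [show ((1) + i) - (-i) = ((1) + (-1)*i) from by linear_combination i * h3] at hs')
  have cFA : P9minusEpsᶜ.Adj ⟨i, mF⟩ ⟨((-1) : K), mA⟩ := by
    rw [SimpleGraph.compl_adj]
    refine ⟨fun hh => (Ne.symm ddAF) (congrArg Subtype.val hh), fun hadj => ?_⟩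
    have hadj' := (SimpleGraph.fromRel_adj (fun a b : K => IsSquare (a - b)) _ _).mp hadj
    rcases hadj'.2 with hs | hs
    · have hs' : IsSquare (i - ((-1) : K)) := hs
      exact nsG (by rwa [show i - ((-1) : K) = ((1) + i) from by linear_combination ((0) : K) * h3] at hs')
    · have hs' : IsSquare (((-1) : K) - i) := hs
      exact nsC (by rwa [show ((-1) : K) - i = ((-1) + (-1)*i) from by linear_combination ((0) : K) * h3] at hs')
  have cFB : ¬P9minusEpsᶜ.Adj ⟨i, mF⟩ ⟨((-1) + i), mB⟩ := by
    rw [SimpleGraph.compl_adj]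
    rintro ⟨-, hna⟩
    exact hna ((SimpleGraph.fromRel_adj (fun a b : K => IsSquare (a - b)) _ _).mpr
      ⟨(Ne.symm ddBF), Or.inl (show IsSquare (i - ((-1) + i)) by rw [show i - ((-1) + i) = ((1) : K) from by linear_combination ((0) : K) * h3]; exact sq1)⟩)
  have cFC : P9minusEpsᶜ.Adj ⟨i, mF⟩ ⟨((-1) + (-1)*i), mC⟩ := by
    rw [SimpleGraph.compl_adj]
    refine ⟨fun hh => (Ne.symm ddCF) (congrArg Subtype.val hh), fun hadj => ?_⟩
    have hadj' := (SimpleGraph.fromRel_adj (fun a b : K => IsSquare (a - b)) _ _).mp hadj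
    rcases hadj'.2 with hs | hs
    · have hs' : IsSquare (i - ((-1) + (-1)*i)) := hs
      exact nsD (by rwa [show i - ((-1) + (-1)*i) = ((1) + (-1)*i) from by linear_combination i * h3] at hs')
    · have hs' : IsSquare (((-1) + (-1)*i) - i) := hs
      exact nsB (by rwa [show ((-1) + (-1)*i) - i = ((-1) + i) from by linear_combination (-i) * h3] at hs')
  have cFD : P9minusEpsᶜ.Adj ⟨i, mF⟩ ⟨((1) + (-1)*i), mD⟩ := by
    rw [SimpleGraph.compl_adj]
    refine ⟨fun hh => (Ne.symm ddDF) (congrArg Subtype.val hh), fun hadj => ?_⟩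
    have hadj' := (SimpleGraph.fromRel_adj (fun a b : K => IsSquare (a - b)) _ _).mp hadj
    rcases hadj'.2 with hs | hs
    · have hs' : IsSquare (i - ((1) + (-1)*i)) := hs
      exact nsC (by rwa [show i - ((1) + (-1)*i) = ((-1) + (-1)*i) from by linear_combination i * h3] at hs')
    · have hs' : IsSquare (((1) + (-1)*i) - i) := hs
      exact nsG (by rwa [show ((1) + (-1)*i) - i = ((1) + i) from by linear_combination (-i) * h3] at hs')
  have cFE : ¬P9minusEpsᶜ.Adj ⟨i, mF⟩ ⟨(-i), mE⟩ := by
    rw [SimpleGraph.compl_adj]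
    rintro ⟨-, hna⟩
    exact hna ((SimpleGraph.fromRel_adj (fun a b : K => IsSquare (a - b)) _ _).mpr
      ⟨(Ne.symm ddEF), Or.inl (show IsSquare (i - (-i)) by rw [show i - (-i) = (-i) from by linear_combination i * h3]; exact sqmi)⟩)
  have cFG : ¬P9minusEpsᶜ.Adj ⟨i, mF⟩ ⟨((1) + i), mG⟩ := by
    rw [SimpleGraph.compl_adj]
    rintro ⟨-, hna⟩
    exact hna ((SimpleGraph.fromRel_adj (fun a b : K => IsSquare (a - b)) _ _).mpr
      ⟨ddFG, Or.inl (show IsSquare (i - ((1) + i)) by rw [show i - ((1) + i) = ((-1) : K) from by linear_combination ((0) : K) * h3]; exact sqm1)⟩)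
  have cGA : P9minusEpsᶜ.Adj ⟨((1) + i), mG⟩ ⟨((-1) : K), mA⟩ := by
    rw [SimpleGraph.compl_adj]
    refine ⟨fun hh => (Ne.symm ddAG) (congrArg Subtype.val hh), fun hadj => ?_⟩
    have hadj' := (SimpleGraph.fromRel_adj (fun a b : K => IsSquare (a - b)) _ _).mp hadj
    rcases hadj'.2 with hs | hs
    · have hs' : IsSquare (((1) + i) - ((-1) : K)) := hs
      exact nsB (by rwa [show ((1) + i) - ((-1) : K) = ((-1) + i) from by linear_combination ((1) : K) * h3] at hs')
    · have hs' : IsSquare (((-1) : K) - ((1) + i)) := hs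
      exact nsD (by rwa [show ((-1) : K) - ((1) + i) = ((1) + (-1)*i) from by linear_combination ((-1) : K) * h3] at hs')
  have cGB : ¬P9minusEpsᶜ.Adj ⟨((1) + i), mG⟩ ⟨((-1) + i), mB⟩ := by
    rw [SimpleGraph.compl_adj]
    rintro ⟨-, hna⟩
    exact hna ((SimpleGraph.fromRel_adj (fun a b : K => IsSquare (a - b)) _ _).mpr
      ⟨(Ne.symm ddBG), Or.inl (show IsSquare (((1) + i) - ((-1) + i)) by rw [show ((1) + i) - ((-1) + i) = ((-1) : K) from by linear_combination ((1) : K) * h3]; exact sqm1)⟩)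
  have cGC : P9minusEpsᶜ.Adj ⟨((1) + i), mG⟩ ⟨((-1) + (-1)*i), mC⟩ := by
    rw [SimpleGraph.compl_adj]
    refine ⟨fun hh => (Ne.symm ddCG) (congrArg Subtype.val hh), fun hadj => ?_⟩
    have hadj' := (SimpleGraph.fromRel_adj (fun a b : K => IsSquare (a - b)) _ _).mp hadj
    rcases hadj'.2 with hs | hs
    · have hs' : IsSquare (((1) + i) - ((-1) + (-1)*i)) := hs
      exact nsC (by rwa [show ((1) + i) - ((-1) + (-1)*i) = ((-1) + (-1)*i) from by linear_combination ((1) + i) * h3] at hs')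
    · have hs' : IsSquare (((-1) + (-1)*i) - ((1) + i)) := hs
      exact nsG (by rwa [show ((-1) + (-1)*i) - ((1) + i) = ((1) + i) from by linear_combination ((-1) + (-1)*i) * h3] at hs')
  have cGD : ¬P9minusEpsᶜ.Adj ⟨((1) + i), mG⟩ ⟨((1) + (-1)*i), mD⟩ := by
    rw [SimpleGraph.compl_adj]
    rintro ⟨-, hna⟩
    exact hna ((SimpleGraph.fromRel_adj (fun a b : K => IsSquare (a - b)) _ _).mpr
      ⟨(Ne.symm ddDG), Or.inl (show IsSquare (((1) + i) - ((1) + (-1)*i)) by rw [show ((1) + i) - ((1) + (-1)*i) = (-i) from by linear_combination i * h3]; exact sqmi)⟩)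
  have cGE : P9minusEpsᶜ.Adj ⟨((1) + i), mG⟩ ⟨(-i), mE⟩ := by
    rw [SimpleGraph.compl_adj]
    refine ⟨fun hh => (Ne.symm ddEG) (congrArg Subtype.val hh), fun hadj => ?_⟩
    have hadj' := (SimpleGraph.fromRel_adj (fun a b : K => IsSquare (a - b)) _ _).mp hadj
    rcases hadj'.2 with hs | hs
    · have hs' : IsSquare (((1) + i) - (-i)) := hs
      exact nsD (by rwa [show ((1) + i) - (-i) = ((1) + (-1)*i) from by linear_combination i * h3] at hs')
    · have hs' : IsSquare ((-i) - ((1) + i)) := hs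
      exact nsB (by rwa [show (-i) - ((1) + i) = ((-1) + i) from by linear_combination (-i) * h3] at hs')
  have cGF : ¬P9minusEpsᶜ.Adj ⟨((1) + i), mG⟩ ⟨i, mF⟩ := by
    rw [SimpleGraph.compl_adj]
    rintro ⟨-, hna⟩
    exact hna ((SimpleGraph.fromRel_adj (fun a b : K => IsSquare (a - b)) _ _).mpr
      ⟨(Ne.symm ddFG), Or.inl (show IsSquare (((1) + i) - i) by rw [show ((1) + i) - i = ((1) : K) from by linear_combination ((0) : K) * h3]; exact sq1)⟩)
  have wxy : ¬U.Adj x y := axy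
  have wxz : ¬U.Adj x z := axz
  have wx1 : U.Adj x n1 := ax1
  have wx2 : U.Adj x n2 := ax2
  have wx3 : U.Adj x n3 := ax3
  have wx4 : U.Adj x n4 := ax4
  have wyx : ¬U.Adj y x := fun h' => axy h'.symm
  have wyz : ¬U.Adj y z := ayz
  have wy1 : U.Adj y n1 := ay1
  have wy2 : U.Adj y n2 := ay2
  have wy3 : ¬U.Adj y n3 := ay3
  have wy4 : ¬U.Adj y n4 := ay4
  have wzx : ¬U.Adj z x := fun h' => axz h'.symm
  have wzy : ¬U.Adj z y := fun h' => ayz h'.symm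
  have wz1 : ¬U.Adj z n1 := az1
  have wz2 : ¬U.Adj z n2 := az2
  have wz3 : U.Adj z n3 := az3
  have wz4 : U.Adj z n4 := az4
  have w1x : U.Adj n1 x := ax1.symm
  have w1y : U.Adj n1 y := ay1.symm
  have w1z : ¬U.Adj n1 z := fun h' => az1 h'.symm
  have w12 : ¬U.Adj n1 n2 := a12
  have w13 : U.Adj n1 n3 := a13
  have w14 : ¬U.Adj n1 n4 := a14
  have w2x : U.Adj n2 x := ax2.symm
  have w2y : U.Adj n2 y := ay2.symm
  have w2z : ¬U.Adj n2 z := fun h' => az2 h'.symm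
  have w21 : ¬U.Adj n2 n1 := fun h' => a12 h'.symm
  have w23 : ¬U.Adj n2 n3 := a23
  have w24 : U.Adj n2 n4 := a24
  have w3x : U.Adj n3 x := ax3.symm
  have w3y : ¬U.Adj n3 y := fun h' => ay3 h'.symm
  have w3z : U.Adj n3 z := az3.symm
  have w31 : U.Adj n3 n1 := a13.symm
  have w32 : ¬U.Adj n3 n2 := fun h' => a23 h'.symm
  have w34 : ¬U.Adj n3 n4 := a34
  have w4x : U.Adj n4 x := ax4.symm
  have w4y : ¬U.Adj n4 y := fun h' => ay4 h'.symm
  have w4z : U.Adj n4 z := az4.symm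
  have w41 : ¬U.Adj n4 n1 := fun h' => a14 h'.symm
  have w42 : U.Adj n4 n2 := a24.symm
  have w43 : ¬U.Adj n4 n3 := fun h' => a34 h'.symm
  let g1 : Fin 7 → ↥S := ![⟨x, mSx⟩, ⟨y, mSy⟩, ⟨z, mSz⟩, ⟨n1, mSn1⟩, ⟨n2, mSn2⟩, ⟨n3, mSn3⟩, ⟨n4, mSn4⟩]
  let g2 : Fin 7 → {w : K // w ≠ 0 ∧ w ≠ 1} := ![⟨((-1) : K), mA⟩, ⟨((-1) + i), mB⟩, ⟨((-1) + (-1)*i), mC⟩, ⟨((1) + (-1)*i), mD⟩, ⟨(-i), mE⟩, ⟨i, mF⟩, ⟨((1) + i), mG⟩]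
  have hg1inj : Function.Injective g1 := by
    have h1 : Function.Injective (Subtype.val ∘ g1) := by
      have hfg : Subtype.val ∘ g1 = ![x, y, z, n1, n2, n3, n4] := by
        funext k; fin_cases k <;> rfl
      rw [hfg, ← List.nodup_ofFn]
      have hl : List.ofFn ![x, y, z, n1, n2, n3, n4] = [x, y, z, n1, n2, n3, n4] := by
        simp [List.ofFn_succ]
      rw [hl]
      simp only [List.nodup_cons, List.mem_cons, List.mem_singleton, List.not_mem_nil,
        List.nodup_nil, and_true, not_or, or_false]
      exact ⟨⟨dxy, dxz, dx1, dx2, dx3, dx4⟩, ⟨dyz, dy1, dy2, dy3, dy4⟩, ⟨dz1, dz2, dz3, dz4⟩, ⟨d12, d13, d14⟩, ⟨d23, d24⟩, d34, not_false⟩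
    exact fun a b hab => h1 (congrArg Subtype.val hab)
  have hg1surj : Function.Surjective g1 := by
    rintro ⟨v, hv⟩
    rw [hS] at hv
    simp only [Set.mem_insert_iff, Set.mem_singleton_iff] at hv
    rcases hv with rfl | rfl | rfl | rfl | rfl | rfl | rfl
    · exact ⟨0, rfl⟩
    · exact ⟨1, rfl⟩
    · exact ⟨2, rfl⟩
    · exact ⟨3, rfl⟩
    · exact ⟨4, rfl⟩
    · exact ⟨5, rfl⟩
    · exact ⟨6, rfl⟩
  have hg2inj : Function.Injective g2 := by
    have h1 : Function.Injective (Subtype.val ∘ g2) := by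
      have hfg : Subtype.val ∘ g2 = ![((-1) : K), ((-1) + i), ((-1) + (-1)*i), ((1) + (-1)*i), (-i), i, ((1) + i)] := by
        funext k; fin_cases k <;> rfl
      rw [hfg, ← List.nodup_ofFn]
      have hl : List.ofFn ![((-1) : K), ((-1) + i), ((-1) + (-1)*i), ((1) + (-1)*i), (-i), i, ((1) + i)] = [((-1) : K), ((-1) + i), ((-1) + (-1)*i), ((1) + (-1)*i), (-i), i, ((1) + i)] := by
        simp [List.ofFn_succ]
      rw [hl]
      simp only [List.nodup_cons, List.mem_cons, List.mem_singleton, List.not_mem_nil,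
        List.nodup_nil, and_true, not_or, or_false]
      exact ⟨⟨ddAB, ddAC, ddAD, ddAE, ddAF, ddAG⟩, ⟨ddBC, ddBD, ddBE, ddBF, ddBG⟩, ⟨ddCD, ddCE, ddCF, ddCG⟩, ⟨ddDE, ddDF, ddDG⟩, ⟨ddEF, ddEG⟩, ddFG, not_false⟩
    exact fun a b hab => h1 (congrArg Subtype.val hab)
  have hg2surj : Function.Surjective g2 := by
    rintro ⟨w, hw⟩
    rcases hL w with rfl | rfl | rfl | rfl | rfl | rfl | rfl | rfl | rfl
    · exact absurd rfl hw.1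
    · exact absurd rfl hw.2
    · exact ⟨0, rfl⟩
    · exact ⟨1, rfl⟩
    · exact ⟨2, rfl⟩
    · exact ⟨3, rfl⟩
    · exact ⟨4, rfl⟩
    · exact ⟨5, rfl⟩
    · exact ⟨6, rfl⟩
  let e1 := Equiv.ofBijective g1 ⟨hg1inj, hg1surj⟩
  let e2 := Equiv.ofBijective g2 ⟨hg2inj, hg2surj⟩
  refine ⟨⟨e1.symm.trans e2, ?_⟩⟩
  intro a b
  obtain ⟨p, rfl⟩ := e1.surjective a
  obtain ⟨q, rfl⟩ := e1.surjective b
  show P9minusEpsᶜ.Adj (e2 (e1.symm (e1 p))) (e2 (e1.symm (e1 q))) ↔ (U.induce S).Adj (e1 p) (e1 q)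
  rw [e1.symm_apply_apply, e1.symm_apply_apply]
  show P9minusEpsᶜ.Adj (g2 p) (g2 q) ↔ (U.induce S).Adj (g1 p) (g1 q)
  fin_cases p <;> fin_cases q <;>
    first
      | exact iff_of_false P9minusEpsᶜ.irrefl (U.induce S).irrefl
      | exact iff_of_true (by assumption) (by assumption)
      | exact iff_of_false (by assumption) (by assumption)

lemma caseP9 {U : SimpleGraph V} (hCF : ClawFree U) (hCFc : ClawFree Uᶜ) (S : Set V)
    (x y z n1 n2 n3 n4 : V) (hS : S = {x, y, z, n1, n2, n3, n4})
    (dxy : x ≠ y) (dxz : x ≠ z) (dyz : y ≠ z)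
    (d12 : n1 ≠ n2) (d13 : n1 ≠ n3) (d14 : n1 ≠ n4) (d23 : n2 ≠ n3) (d24 : n2 ≠ n4)
    (d34 : n3 ≠ n4)
    (hxy : ¬U.Adj x y) (hxz : ¬U.Adj x z) (hyz : ¬U.Adj y z)
    (hx1 : U.Adj x n1) (hx2 : U.Adj x n2) (hx3 : U.Adj x n3) (hx4 : U.Adj x n4)
    (hy1 : U.Adj n1 y) (hy2 : U.Adj n2 y) (hz3 : U.Adj n3 z) (hz4 : U.Adj n4 z) :
    Nonempty (U.induce S ≃g P9minusEpsᶜ) := by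
  have dy1 : y ≠ n1 := fun h => hxy (by rw [h]; exact hx1)
  have dy2 : y ≠ n2 := fun h => hxy (by rw [h]; exact hx2)
  have dy3 : y ≠ n3 := fun h => hxy (by rw [h]; exact hx3)
  have dy4 : y ≠ n4 := fun h => hxy (by rw [h]; exact hx4)
  have dz1 : z ≠ n1 := fun h => hxz (by rw [h]; exact hx1)
  have dz2 : z ≠ n2 := fun h => hxz (by rw [h]; exact hx2)
  have dz3 : z ≠ n3 := fun h => hxz (by rw [h]; exact hx3)
  have dz4 : z ≠ n4 := fun h => hxz (by rw [h]; exact hx4)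
  have hz1 : ¬U.Adj n1 z := fun hz => noClaw hCF dxy dxz dyz hx1.symm hy1 hz hxy hxz hyz
  have hz2 : ¬U.Adj n2 z := fun hz => noClaw hCF dxy dxz dyz hx2.symm hy2 hz hxy hxz hyz
  have hy3 : ¬U.Adj n3 y := fun hy => noClaw hCF dxy dxz dyz hx3.symm hy hz3 hxy hxz hyz
  have hy4 : ¬U.Adj n4 y := fun hy => noClaw hCF dxy dxz dyz hx4.symm hy hz4 hxy hxz hyz
  have a12 : ¬U.Adj n1 n2 := fun h12 => noClawC hCFc dxz.symm dz1 dz2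
    (fun h => hxz h.symm) (fun h => hz1 h.symm) (fun h => hz2 h.symm) hx1 hx2 h12
  have a34 : ¬U.Adj n3 n4 := fun h34 => noClawC hCFc dxy.symm dy3 dy4
    (fun h => hxy h.symm) (fun h => hy3 h.symm) (fun h => hy4 h.symm) hx3 hx4 h34
  by_cases h13 : U.Adj n1 n3
  · have h14 : ¬U.Adj n1 n4 := fun h => noClaw hCF dy3 dy4 d34 hy1 h13 h
      (fun h' => hy3 h'.symm) (fun h' => hy4 h'.symm) a34
    have h24 : U.Adj n2 n4 := by
      by_contra hno
      exact noClaw hCF d12 d14 d24 hx1 hx2 hx4 a12 h14 hno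
    have h23 : ¬U.Adj n2 n3 := fun h => noClaw hCF dy3 dy4 d34 hy2 h h24
      (fun h' => hy3 h'.symm) (fun h' => hy4 h'.symm) a34
    exact patternP9 U S x y z n1 n2 n3 n4 hS dxy dxz hx1.ne hx2.ne hx3.ne hx4.ne dyz
      dy1 dy2 dy3 dy4 dz1 dz2 dz3 dz4 d12 d13 d14 d23 d24 d34
      hxy hxz hx1 hx2 hx3 hx4 hyz hy1.symm hy2.symm (fun h => hy3 h.symm)
      (fun h => hy4 h.symm) (fun h => hz1 h.symm) (fun h => hz2 h.symm) hz3.symm hz4.symm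
      a12 h13 h14 h23 h24 a34
  · have h14 : U.Adj n1 n4 := by
      by_contra hno
      exact noClaw hCF d13 d14 d34 hx1 hx3 hx4 h13 hno a34
    have h23 : U.Adj n2 n3 := by
      by_contra hno
      exact noClaw hCF d12 d13 d23 hx1 hx2 hx3 a12 h13 hno
    have h24 : ¬U.Adj n2 n4 := fun h => noClaw hCF dz1 dz2 d12 hz4 h14.symm h.symm
      (fun h' => hz1 h'.symm) (fun h' => hz2 h'.symm) a12
    have hS' : S = {x, y, z, n1, n2, n4, n3} := hS.trans (congrArg (insert x)
      (congrArg (insert y) (congrArg (insert z) (congrArg (insert n1) (congrArg (insert n2)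
        (Set.pair_comm n3 n4))))))
    exact patternP9 U S x y z n1 n2 n4 n3 hS' dxy dxz hx1.ne hx2.ne hx4.ne hx3.ne dyz
      dy1 dy2 dy4 dy3 dz1 dz2 dz4 dz3 d12 d14 d13 d24 d23 d34.symm
      hxy hxz hx1 hx2 hx4 hx3 hyz hy1.symm hy2.symm (fun h => hy4 h.symm)
      (fun h => hy3 h.symm) (fun h => hz1 h.symm) (fun h => hz2 h.symm) hz4.symm hz3.symm
      a12 h14 h13 h24 h23 (fun h => a34 h.symm)

/-- Let `U` and its complement be claw-free and let `x` belong to a 3-element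
    independent set `B`. Then `x` has degree at most 4; moreover the subgraph
    `W` induced on `B ∪ N_U(x)` is isomorphic to `A6ᶜ` or `E6ᶜ` when
    `deg x = 3`, and to `P_{9-ε}ᶜ` when `deg x = 4`. -/
theorem clawfree_indep_degree_le_four {V : Type*} [Fintype V]
    (U : SimpleGraph V) [DecidableRel U.Adj]
    (h : ClawFree U ∧ ClawFree Uᶜ)
    (x : V) (B : Set V) (hxB : x ∈ B) (hB3 : B.ncard = 3) (hB : Uᶜ.IsClique B) :
    U.degree x ≤ 4 ∧
      (U.degree x = 3 →
        Nonempty (U.induce (B ∪ U.neighborSet x) ≃g A6ᶜ) ∨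
          Nonempty (U.induce (B ∪ U.neighborSet x) ≃g E6ᶜ)) ∧
      (U.degree x = 4 →
        Nonempty (U.induce (B ∪ U.neighborSet x) ≃g P9minusEpsᶜ)) := by
  classical
  obtain ⟨hCF, hCFc⟩ := h
  obtain ⟨a0, b0, c0, dab0, dac0, dbc0, hBeq0⟩ := Set.ncard_eq_three.mp hB3
  have hxmem := hxB
  have hyzex : ∃ y z : V, x ≠ y ∧ x ≠ z ∧ y ≠ z ∧ B = {x, y, z} := by
    rw [hBeq0] at hxmem
    simp only [Set.mem_insert_iff, Set.mem_singleton_iff] at hxmem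
    rcases hxmem with rfl | rfl | rfl
    · exact ⟨b0, c0, dab0, dac0, dbc0, hBeq0⟩
    · exact ⟨a0, c0, fun h => dab0 h.symm, dbc0, dac0, by rw [hBeq0]; ext v; simp; tauto⟩
    · exact ⟨a0, b0, fun h => dac0 h.symm, fun h => dbc0 h.symm, dab0,
        by rw [hBeq0]; ext v; simp; tauto⟩
  obtain ⟨y, z, dxy, dxz, dyz, hBeq⟩ := hyzex
  have hyB : y ∈ B := by rw [hBeq]; simp
  have hzB : z ∈ B := by rw [hBeq]; simp
  have hxy : ¬U.Adj x y := ((U.compl_adj x y).mp (hB hxB hyB dxy)).2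
  have hxz : ¬U.Adj x z := ((U.compl_adj x z).mp (hB hxB hzB dxz)).2
  have hyzadj : ¬U.Adj y z := ((U.compl_adj y z).mp (hB hyB hzB dyz)).2
  set N := U.neighborFinset x with hNdef
  have hmemN : ∀ n, n ∈ N ↔ U.Adj x n := fun n => U.mem_neighborFinset x n
  have hdeg : U.degree x = N.card := rfl
  have hAMO : ∀ n, U.Adj x n → U.Adj n y → ¬U.Adj n z :=
    fun n hxn hny hnz => noClaw hCF dxy dxz dyz hxn.symm hny hnz hxy hxz hyzadj
  have hPy : ∀ n m, U.Adj x n → U.Adj x m → ¬U.Adj n y → ¬U.Adj m y → ¬U.Adj n m := by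
    intro n m hxn hxm hny hmy hnm
    exact noClawC hCFc dxy.symm (fun h => hxy (by rw [h]; exact hxn))
      (fun h => hxy (by rw [h]; exact hxm)) (fun h' => hxy h'.symm)
      (fun h' => hny h'.symm) (fun h' => hmy h'.symm) hxn hxm hnm
  have hPz : ∀ n m, U.Adj x n → U.Adj x m → ¬U.Adj n z → ¬U.Adj m z → ¬U.Adj n m := by
    intro n m hxn hxm hnz hmz hnm
    exact noClawC hCFc dxz.symm (fun h => hxz (by rw [h]; exact hxn))
      (fun h => hxz (by rw [h]; exact hxm)) (fun h' => hxz h'.symm)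
      (fun h' => hnz h'.symm) (fun h' => hmz h'.symm) hxn hxm hnm
  have hI3 : ∀ n m p, n ≠ m → n ≠ p → m ≠ p → U.Adj x n → U.Adj x m → U.Adj x p →
      ¬U.Adj n m → ¬U.Adj n p → ¬U.Adj m p → False := by
    intro n m p hnm hnp hmp hxn hxm hxp h1 h2 h3
    exact noClaw hCF hnm hnp hmp hxn hxm hxp h1 h2 h3
  have himpy : ∀ n m p, n ≠ m → n ≠ p → m ≠ p → U.Adj x n → U.Adj x m → U.Adj x p →
      ¬U.Adj n y → ¬U.Adj m y → ¬U.Adj p y → False := by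
    intro n m p hnm hnp hmp hxn hxm hxp h1 h2 h3
    exact hI3 n m p hnm hnp hmp hxn hxm hxp (hPy n m hxn hxm h1 h2)
      (hPy n p hxn hxp h1 h3) (hPy m p hxm hxp h2 h3)
  have himpz : ∀ n m p, n ≠ m → n ≠ p → m ≠ p → U.Adj x n → U.Adj x m → U.Adj x p →
      ¬U.Adj n z → ¬U.Adj m z → ¬U.Adj p z → False := by
    intro n m p hnm hnp hmp hxn hxm hxp h1 h2 h3
    exact hI3 n m p hnm hnp hmp hxn hxm hxp (hPz n m hxn hxm h1 h2)
      (hPz n p hxn hxp h1 h3) (hPz m p hxm hxp h2 h3)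
  set Ay := N.filter (fun n => ¬U.Adj n y) with hAydef
  set Az := N.filter (fun n => ¬U.Adj n z) with hAzdef
  have hAyle : ∀ (W : Finset V) (w : V), W = N.filter (fun n => ¬U.Adj n w) →
      (∀ n m p, n ≠ m → n ≠ p → m ≠ p → U.Adj x n → U.Adj x m → U.Adj x p →
        ¬U.Adj n w → ¬U.Adj m w → ¬U.Adj p w → False) → W.card ≤ 2 := by
    intro W w hW himp
    by_contra hc
    push_neg at hc
    obtain ⟨t, hts, htc⟩ := Finset.exists_subset_card_eq (show 3 ≤ W.card by omega)
    obtain ⟨p, q, r, hpq, hpr, hqr, ht⟩ := Finset.card_eq_three.mp htc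
    have hp' := hts (show p ∈ t by rw [ht]; simp)
    have hq' := hts (show q ∈ t by rw [ht]; simp)
    have hr' := hts (show r ∈ t by rw [ht]; simp)
    rw [hW] at hp' hq' hr'
    have hp := Finset.mem_filter.mp hp'
    have hq := Finset.mem_filter.mp hq'
    have hr := Finset.mem_filter.mp hr'
    exact himp p q r hpq hpr hqr ((hmemN p).mp hp.1) ((hmemN q).mp hq.1)
      ((hmemN r).mp hr.1) hp.2 hq.2 hr.2
  have hAy2 : Ay.card ≤ 2 := hAyle Ay y hAydef himpy
  have hAz2 : Az.card ≤ 2 := hAyle Az z hAzdef himpz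
  have hsub : N ⊆ Ay ∪ Az := by
    intro n hn
    by_cases hny : U.Adj n y
    · exact Finset.mem_union_right _ (Finset.mem_filter.mpr ⟨hn, hAMO n ((hmemN n).mp hn) hny⟩)
    · exact Finset.mem_union_left _ (Finset.mem_filter.mpr ⟨hn, hny⟩)
  have hNle : N.card ≤ 4 :=
    le_trans (Finset.card_le_card hsub) (le_trans (Finset.card_union_le _ _) (by omega))
  refine ⟨hdeg ▸ hNle, ?_, ?_⟩
  · -- degree 3
    intro h3
    have hN3 : N.card = 3 := hdeg ▸ h3
    obtain ⟨a, b, c, dab, dac, dbc, hNeq⟩ := Finset.card_eq_three.mp hN3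
    have hax : U.Adj x a := (hmemN a).mp (by rw [hNeq]; simp)
    have hbx : U.Adj x b := (hmemN b).mp (by rw [hNeq]; simp)
    have hcx : U.Adj x c := (hmemN c).mp (by rw [hNeq]; simp)
    have hmem3 : ∀ v, U.Adj x v ↔ (v = a ∨ v = b ∨ v = c) := by
      intro v
      rw [← hmemN v, hNeq]
      simp
    have Sabc : (B ∪ U.neighborSet x : Set V) = {x, y, z, a, b, c} := by
      ext v
      simp only [Set.mem_union, hBeq, SimpleGraph.mem_neighborSet, Set.mem_insert_iff,
        Set.mem_singleton_iff, hmem3 v]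
      tauto
    have Sacb := Sabc.trans (congrArg (insert x) (congrArg (insert y) (congrArg (insert z)
      (congrArg (insert a) (Set.pair_comm b c)))))
    have Sbac := Sabc.trans (congrArg (insert x) (congrArg (insert y) (congrArg (insert z)
      (Set.insert_comm a b {c}))))
    have Sbca := Sabc.trans (congrArg (insert x) (congrArg (insert y) (congrArg (insert z)
      ((Set.insert_comm a b {c}).trans (congrArg (insert b) (Set.pair_comm a c))))))
    have Scab := Sabc.trans (congrArg (insert x) (congrArg (insert y) (congrArg (insert z)
      ((congrArg (insert a) (Set.pair_comm b c)).trans (Set.insert_comm a c {b})))))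
    have Scba := Sabc.trans (congrArg (insert x) (congrArg (insert y) (congrArg (insert z)
      (((Set.insert_comm a b {c}).trans (congrArg (insert b) (Set.pair_comm a c))).trans
        (Set.insert_comm b c {a})))))
    have Tyz : ∀ s : Set V, insert x (insert y (insert z s)) = insert x (insert z (insert y s)) :=
      fun s => congrArg (insert x) (Set.insert_comm y z s)
    have Tabc := Sabc.trans (Tyz {a, b, c})
    have Tacb := Sacb.trans (Tyz {a, c, b})
    have Tbca := Sbca.trans (Tyz {b, c, a})
    have trich : ∀ n, U.Adj x n →
        (U.Adj n y ∧ ¬U.Adj n z) ∨ (¬U.Adj n y ∧ U.Adj n z) ∨ (¬U.Adj n y ∧ ¬U.Adj n z) := by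
      intro n hxn
      by_cases h1 : U.Adj n y
      · exact Or.inl ⟨h1, hAMO n hxn h1⟩
      · by_cases h2 : U.Adj n z
        · exact Or.inr (Or.inl ⟨h1, h2⟩)
        · exact Or.inr (Or.inr ⟨h1, h2⟩)
    rcases trich a hax with ⟨hay, haz⟩ | ⟨hay, haz⟩ | ⟨hay, haz⟩ <;>
      rcases trich b hbx with ⟨hby, hbz⟩ | ⟨hby, hbz⟩ | ⟨hby, hbz⟩ <;>
      rcases trich c hcx with ⟨hcy, hcz⟩ | ⟨hcy, hcz⟩ | ⟨hcy, hcz⟩ <;>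
      first
      | exact (himpy a b c dab dac dbc hax hbx hcx hay hby hcy).elim
      | exact (himpz a b c dab dac dbc hax hbx hcx haz hbz hcz).elim
      | exact Or.inr (caseE6 hCF hCFc _ x y z a b c Sabc dxy dxz dyz dab dac dbc
          hxy hxz hyzadj hax hbx hcx hay hby hcz)
      | exact Or.inr (caseE6 hCF hCFc _ x y z a c b Sacb dxy dxz dyz dac dab dbc.symm
          hxy hxz hyzadj hax hcx hbx hay hcy hbz)
      | exact Or.inr (caseE6 hCF hCFc _ x y z b c a Sbca dxy dxz dyz dbc dab.symm dac.symm
          hxy hxz hyzadj hbx hcx hax hby hcy haz)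
      | exact Or.inr (caseE6 hCF hCFc _ x z y a b c Tabc dxz dxy dyz.symm dab dac dbc
          hxz hxy (fun h' => hyzadj h'.symm) hax hbx hcx haz hbz hcy)
      | exact Or.inr (caseE6 hCF hCFc _ x z y a c b Tacb dxz dxy dyz.symm dac dab dbc.symm
          hxz hxy (fun h' => hyzadj h'.symm) hax hcx hbx haz hcz hby)
      | exact Or.inr (caseE6 hCF hCFc _ x z y b c a Tbca dxz dxy dyz.symm dbc dab.symm dac.symm
          hxz hxy (fun h' => hyzadj h'.symm) hbx hcx hax hbz hcz hay)
      | exact Or.inl (caseA6 hCF hCFc _ x y z a b c Sabc dxy dxz dyz dab dac dbc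
          hxy hxz hyzadj hax hbx hcx hay hbz hcy hcz)
      | exact Or.inl (caseA6 hCF hCFc _ x y z a c b Sacb dxy dxz dyz dac dab dbc.symm
          hxy hxz hyzadj hax hcx hbx hay hcz hby hbz)
      | exact Or.inl (caseA6 hCF hCFc _ x y z b a c Sbac dxy dxz dyz dab.symm dbc dac
          hxy hxz hyzadj hbx hax hcx hby haz hcy hcz)
      | exact Or.inl (caseA6 hCF hCFc _ x y z b c a Sbca dxy dxz dyz dbc dab.symm dac.symm
          hxy hxz hyzadj hbx hcx hax hby hcz hay haz)
      | exact Or.inl (caseA6 hCF hCFc _ x y z c a b Scab dxy dxz dyz dac.symm dbc.symm dab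
          hxy hxz hyzadj hcx hax hbx hcy haz hby hbz)
      | exact Or.inl (caseA6 hCF hCFc _ x y z c b a Scba dxy dxz dyz dbc.symm dac.symm dab.symm
          hxy hxz hyzadj hcx hbx hax hcy hbz hay haz)
  · -- degree 4
    intro h4
    have hN4 : N.card = 4 := hdeg ▸ h4
    have hNo : ∀ n ∈ N, U.Adj n y ∨ U.Adj n z := by
      intro n hn
      by_contra hno
      push_neg at hno
      have hUnion : Ay ∪ Az = N :=
        le_antisymm (Finset.union_subset (Finset.filter_subset _ _) (Finset.filter_subset _ _))
          hsub
      have hInter : n ∈ Ay ∩ Az := Finset.mem_inter.mpr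
        ⟨Finset.mem_filter.mpr ⟨hn, hno.1⟩, Finset.mem_filter.mpr ⟨hn, hno.2⟩⟩
      have h1 : 1 ≤ (Ay ∩ Az).card := Finset.card_pos.mpr ⟨n, hInter⟩
      have h2 := Finset.card_union_add_card_inter Ay Az
      rw [hUnion, hN4] at h2
      omega
    set Ny := N.filter (fun n => U.Adj n y) with hNydef
    set Nz := N.filter (fun n => U.Adj n z) with hNzdef
    have hdisjYZ : Disjoint Ny Nz := by
      rw [Finset.disjoint_left]
      intro n hn1 hn2
      have hn1' := Finset.mem_filter.mp hn1
      have hn2' := Finset.mem_filter.mp hn2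
      exact hAMO n ((hmemN n).mp hn1'.1) hn1'.2 hn2'.2
    have hupYZ : Ny ∪ Nz = N := by
      apply le_antisymm (Finset.union_subset (Finset.filter_subset _ _) (Finset.filter_subset _ _))
      intro n hn
      rcases hNo n hn with h' | h'
      · exact Finset.mem_union_left _ (Finset.mem_filter.mpr ⟨hn, h'⟩)
      · exact Finset.mem_union_right _ (Finset.mem_filter.mpr ⟨hn, h'⟩)
    have hsum : Ny.card + Nz.card = 4 := by
      rw [← Finset.card_union_of_disjoint hdisjYZ, hupYZ, hN4]
    have hNyAz : Ny ⊆ Az := by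
      intro n hn
      have hn' := Finset.mem_filter.mp hn
      exact Finset.mem_filter.mpr ⟨hn'.1, hAMO n ((hmemN n).mp hn'.1) hn'.2⟩
    have hNzAy : Nz ⊆ Ay := by
      intro n hn
      have hn' := Finset.mem_filter.mp hn
      refine Finset.mem_filter.mpr ⟨hn'.1, fun hny => ?_⟩
      exact hAMO n ((hmemN n).mp hn'.1) hny hn'.2
    have hNy2 : Ny.card = 2 := by
      have h1 : Ny.card ≤ 2 := le_trans (Finset.card_le_card hNyAz) hAz2
      have h2 : Nz.card ≤ 2 := le_trans (Finset.card_le_card hNzAy) hAy2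
      omega
    have hNz2 : Nz.card = 2 := by
      have h1 : Ny.card ≤ 2 := le_trans (Finset.card_le_card hNyAz) hAz2
      omega
    obtain ⟨n1, n2, d12, hNyeq⟩ := Finset.card_eq_two.mp hNy2
    obtain ⟨n3, n4, d34, hNzeq⟩ := Finset.card_eq_two.mp hNz2
    have h1m : n1 ∈ Ny := by rw [hNyeq]; simp
    have h2m : n2 ∈ Ny := by rw [hNyeq]; simp
    have h3m : n3 ∈ Nz := by rw [hNzeq]; simp
    have h4m : n4 ∈ Nz := by rw [hNzeq]; simp
    have h1f := Finset.mem_filter.mp h1m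
    have h2f := Finset.mem_filter.mp h2m
    have h3f := Finset.mem_filter.mp h3m
    have h4f := Finset.mem_filter.mp h4m
    have hx1 : U.Adj x n1 := (hmemN n1).mp h1f.1
    have hx2 : U.Adj x n2 := (hmemN n2).mp h2f.1
    have hx3 : U.Adj x n3 := (hmemN n3).mp h3f.1
    have hx4 : U.Adj x n4 := (hmemN n4).mp h4f.1
    have hy1 : U.Adj n1 y := h1f.2
    have hy2 : U.Adj n2 y := h2f.2
    have hz3 : U.Adj n3 z := h3f.2
    have hz4 : U.Adj n4 z := h4f.2
    have h3y : ¬U.Adj n3 y := fun h' => hAMO n3 hx3 h' hz3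
    have h4y : ¬U.Adj n4 y := fun h' => hAMO n4 hx4 h' hz4
    have d13 : n1 ≠ n3 := fun h' => h3y (h' ▸ hy1)
    have d14 : n1 ≠ n4 := fun h' => h4y (h' ▸ hy1)
    have d23 : n2 ≠ n3 := fun h' => h3y (h' ▸ hy2)
    have d24 : n2 ≠ n4 := fun h' => h4y (h' ▸ hy2)
    have hmem4 : ∀ v, U.Adj x v ↔ (v = n1 ∨ v = n2 ∨ v = n3 ∨ v = n4) := by
      intro v
      rw [← hmemN v, ← hupYZ, Finset.mem_union, hNyeq, hNzeq]
      simp [or_assoc]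
    have hNset : U.neighborSet x = {n1, n2, n3, n4} := by
      ext v
      rw [SimpleGraph.mem_neighborSet, hmem4 v]
      simp
    have hSeq : (B ∪ U.neighborSet x : Set V) = {x, y, z, n1, n2, n3, n4} := by
      rw [hBeq, hNset, Set.insert_union, Set.insert_union, Set.singleton_union]
    exact caseP9 hCF hCFc _ x y z n1 n2 n3 n4 hSeq dxy dxz dyz d12 d13 d14 d23 d24 d34
      hxy hxz hyzadj hx1 hx2 hx3 hx4 hy1 hy2 hz3 hz4
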